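/- arXiv:1111.3410 — 8 statements merged into one kernel-verified Lean document; each statement's English description precedes it below -/
import Mathlib

section
/- Let 0 = r_0 < r_1 < ... < r_n be strictly increasing real numbers and define the Gelfond-Bernstein functions on [0,1] by H^n_{k}(t) = (-1)^{n-k} r_{k+1}···r_n [r_k,...,r_n]f_t for k = 0,...,n-1 and H^n_n(t) = t^{r_n}, where f_t(x) = t^x. Then for every t in [0,1], the sum over k from 0 to n of H^n_k(t) equals 1. -/
/-- The divided difference `[x 0, ..., x n] f`, defined recursively. -/
noncomputable def divDiff (f : ℝ → ℝ) : ℕ → (ℕ → ℝ) → ℝ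
  | 0, x => f (x 0)
  | n + 1, x =>
      (divDiff f n (fun i => x (i + 1)) - divDiff f n x) / (x (n + 1) - x 0)

/-- The Gelfond-Bernstein basis function `H^n_{k,Λ}` for `Λ = (r 0, ..., r n)`:
`H^n_k t = (-1)^(n-k) · r_{k+1}···r_n · [r_k,...,r_n] f_t` for `k < n`, and
`H^n_n t = t ^ r n`, where `f_t x = t ^ x` (real power). -/
noncomputable def GB (n : ℕ) (r : ℕ → ℝ) (k : ℕ) (t : ℝ) : ℝ :=
  if k = n then t ^ (r n)
  else (-1 : ℝ) ^ (n - k) * (∏ j ∈ Finset.Ioc k n, r j) *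
    divDiff (fun x => t ^ x) (n - k) (fun i => r (k + i))

/-- Prepend a node. -/
def consF (a : ℝ) (x : ℕ → ℝ) : ℕ → ℝ := fun i => Nat.casesOn i a x

lemma divDiff_succ (f : ℝ → ℝ) (n : ℕ) (x : ℕ → ℝ) :
    divDiff f (n + 1) x
      = (divDiff f n (fun i => x (i + 1)) - divDiff f n x) / (x (n + 1) - x 0) := rfl

lemma divDiff_consF_succ (f : ℝ → ℝ) (n : ℕ) (a : ℝ) (x : ℕ → ℝ) :
    divDiff f (n + 1) (consF a x)
      = (divDiff f n x - divDiff f n (consF a x)) / (x n - a) := rfl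

lemma divDiff_swap (f : ℝ → ℝ) :
    ∀ (m : ℕ) (a : ℝ) (x : ℕ → ℝ),
      (∀ j ≤ m, x j ≠ a) → (∀ j, 1 ≤ j → j ≤ m → x j ≠ x 0) →
      (x 0 - a) * divDiff f (m + 1) (consF a x)
        = divDiff f m x - divDiff f m (consF a (fun i => x (i + 1)))
  | 0, a, x, hxa, _ => by
      have h0 : x 0 - a ≠ 0 := sub_ne_zero.mpr (hxa 0 le_rfl)
      rw [divDiff_consF_succ]
      show (x 0 - a) * ((f (x 0) - f a) / (x 0 - a)) = f (x 0) - f a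
      field_simp
  | m + 1, a, x, hxa, hx0 => by
      have hx0a : x 0 - a ≠ 0 := sub_ne_zero.mpr (hxa 0 (by omega))
      have hd1 : x (m + 1) - a ≠ 0 := sub_ne_zero.mpr (hxa (m + 1) le_rfl)
      have hd0 : x (m + 1) - x 0 ≠ 0 :=
        sub_ne_zero.mpr (hx0 (m + 1) (by omega) (by omega))
      have IH := divDiff_swap f m a x (fun j hj => hxa j (by omega))
        (fun j h1 h2 => hx0 j h1 (by omega))
      have hu : divDiff f (m + 1) (consF a x)
          = (divDiff f m x - divDiff f m (consF a (fun i => x (i + 1)))) / (x 0 - a) := by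
        rw [eq_div_iff hx0a]
        linarith [IH]
      rw [divDiff_consF_succ f (m + 1) a x, hu, divDiff_succ f m x,
        divDiff_consF_succ f m a (fun i => x (i + 1))]
      field_simp
      ring

lemma newton (f : ℝ → ℝ) :
    ∀ (n : ℕ) (a : ℝ) (x : ℕ → ℝ),
      (∀ i j, i < j → j ≤ n → x i ≠ x j) → (∀ j, 1 ≤ j → j ≤ n → a ≠ x j) →
      ∑ k ∈ Finset.range (n + 1),
          (∏ j ∈ Finset.Icc (k + 1) n, (a - x j)) * divDiff f (n - k) (fun i => x (k + i))
        = f a - (∏ j ∈ Finset.range (n + 1), (a - x j)) * divDiff f (n + 1) (consF a x)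
  | 0, a, x, _, _ => by
      rw [divDiff_consF_succ, Finset.sum_range_one, Finset.prod_range_one,
        Finset.Icc_eq_empty (by omega), Finset.prod_empty]
      show (1 : ℝ) * f (x (0 + 0)) = f a - (a - x 0) * ((f (x 0) - f a) / (x 0 - a))
      by_cases h : x 0 = a
      · simp [h]
      · have h' : x 0 - a ≠ 0 := sub_ne_zero.mpr h
        field_simp
        ring
  | n + 1, a, x, hinj, hax => by
      have hinj' : ∀ i j, i < j → j ≤ n → x (i + 1) ≠ x (j + 1) :=
        fun i j h hj => hinj (i + 1) (j + 1) (by omega) (by omega)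
      have hax' : ∀ j, 1 ≤ j → j ≤ n → a ≠ x (j + 1) :=
        fun j h1 h2 => hax (j + 1) (by omega) (by omega)
      have IH := newton f n a (fun i => x (i + 1)) hinj' hax'
      rw [Finset.sum_range_succ']
      have hterm : ∀ k ∈ Finset.range (n + 1),
          (∏ j ∈ Finset.Icc (k + 1 + 1) (n + 1), (a - x j)) *
              divDiff f (n + 1 - (k + 1)) (fun i => x (k + 1 + i))
            = (∏ j ∈ Finset.Icc (k + 1) n, (a - x (j + 1))) *
              divDiff f (n - k) (fun i => x (k + i + 1)) := by
        intro k _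
        congr 1
        · rw [← Finset.map_add_right_Icc _ _ 1, Finset.prod_map]
          rfl
        · congr 1
          · omega
          · funext i; congr 1; omega
      rw [Finset.sum_congr rfl hterm, IH]
      have hprod0 : (∏ j ∈ Finset.Icc (0 + 1) (n + 1), (a - x j))
          = ∏ j ∈ Finset.range (n + 1), (a - x (j + 1)) := by
        rw [← Finset.map_add_right_Icc _ _ 1, Finset.prod_map,
          Finset.range_eq_Ico, Nat.Ico_zero_eq_range]
        rw [show Finset.Icc 0 n = Finset.range (n + 1) by
          rw [Finset.range_eq_Ico, Finset.Ico_add_one_right_eq_Icc]]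
        rfl
      have hx00 : (fun i => x (0 + i)) = x := by funext i; rw [Nat.zero_add]
      rw [hprod0, hx00]
      rw [show n + 1 - 0 = n + 1 from rfl]
      rw [show (∏ j ∈ Finset.range (n + 1 + 1), (a - x j))
          = (∏ j ∈ Finset.range (n + 1), (a - x (j + 1))) * (a - x 0) from
        Finset.prod_range_succ' _ _]
      set W := ∏ j ∈ Finset.range (n + 1), (a - x (j + 1)) with hW
      by_cases h : a = x 0
      · have hcx : consF a (fun i => x (i + 1)) = x := by
          funext i; cases i with
          | zero => exact h
          | succ m => rfl
        rw [hcx, h]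
        ring
      · have hs := divDiff_swap f (n + 1) a x
          (fun j hj => by
            rcases Nat.eq_zero_or_pos j with h1 | h1
            · subst h1; exact fun hc => h hc.symm
            · exact fun hc => hax j h1 hj hc.symm)
          (fun j h1 h2 => (hinj 0 j (by omega) h2).symm)
        linear_combination (-W) * hs

theorem GB_sum_one (n : ℕ) (r : ℕ → ℝ) (h0 : r 0 = 0)
    (hr : ∀ i < n, r i < r (i + 1)) :
    ∀ t ∈ Set.Icc (0 : ℝ) 1, ∑ k ∈ Finset.range (n + 1), GB n r k t = 1 := by
  intro t _
  have hlt : ∀ j, j ≤ n → ∀ i, i < j → r i < r j := by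
    intro j
    induction j with
    | zero => intro _ i hi; omega
    | succ m ih =>
      intro hm i hi
      have h1 : r m < r (m + 1) := hr m (by omega)
      rcases Nat.lt_succ_iff_lt_or_eq.mp hi with h | h
      · exact lt_trans (ih (by omega) i h) h1
      · subst h; exact h1
  have key := newton (fun x => t ^ x) n (r 0) r
    (fun i j hij hj => ne_of_lt (hlt j hj i hij))
    (fun j h1 h2 => ne_of_lt (hlt j h2 0 (by omega)))
  have hsum : ∑ k ∈ Finset.range (n + 1), GB n r k t
      = ∑ k ∈ Finset.range (n + 1),
          (∏ j ∈ Finset.Icc (k + 1) n, (r 0 - r j)) *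
            divDiff (fun x => t ^ x) (n - k) (fun i => r (k + i)) := by
    apply Finset.sum_congr rfl
    intro k hk
    simp only [Finset.mem_range] at hk
    by_cases h : k = n
    · subst h
      rw [GB, if_pos rfl, Finset.Icc_eq_empty (by omega), Finset.prod_empty,
        Nat.sub_self]
      show t ^ r k = 1 * t ^ r (k + 0)
      rw [Nat.add_zero, one_mul]
    · rw [GB, if_neg h]
      have hIcc : Finset.Icc (k + 1) n = Finset.Ioc k n := by
        ext j; simp [Finset.mem_Icc, Finset.mem_Ioc]
      rw [hIcc]
      congr 1
      have hcard : (Finset.Ioc k n).card = n - k := Nat.card_Ioc k n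
      calc (-1 : ℝ) ^ (n - k) * ∏ j ∈ Finset.Ioc k n, r j
          = ∏ j ∈ Finset.Ioc k n, (-1 * r j) := by
            rw [Finset.prod_mul_distrib, Finset.prod_const, hcard]
        _ = ∏ j ∈ Finset.Ioc k n, (r 0 - r j) := by
            apply Finset.prod_congr rfl
            intro j _
            rw [h0]; ring
  rw [hsum, key]
  have hz : (∏ j ∈ Finset.range (n + 1), (r 0 - r j)) = 0 :=
    Finset.prod_eq_zero (i := 0) (Finset.mem_range.mpr (by omega)) (sub_self (r 0))
  rw [hz, zero_mul, sub_zero]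
  show t ^ r 0 = 1
  rw [h0, Real.rpow_zero]
end

section
/- Let Λ_1 = (0=r_0, r_1, ..., r_n) and Λ_2 = (0=r_0, r_1, ..., r_n, r_{n+1}) be strictly increasing sequences of real numbers, and let H^n_{k,Λ_1} and H^{n+1}_{k,Λ_2} be the corresponding Gelfond-Bernstein bases. Then for each k = 0,...,n and all t in [0,1]: H^n_{k,Λ_1}(t) = ((r_{n+1} - r_k)/r_{n+1})·H^{n+1}_{k,Λ_2}(t) + (r_{k+1}/r_{n+1})·H^{n+1}_{k+1,Λ_2}(t). -/
/-- Lemma 1 of the paper: the dimension elevation identity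
`H^n_{k,Λ₁} = ((r_{n+1}-r_k)/r_{n+1})·H^{n+1}_{k,Λ₂} + (r_{k+1}/r_{n+1})·H^{n+1}_{k+1,Λ₂}`. -/
theorem GB_iteration (n : ℕ) (r : ℕ → ℝ) (h0 : r 0 = 0)
    (hr : ∀ i ≤ n, r i < r (i + 1)) (k : ℕ) (hk : k ≤ n)
    (t : ℝ) (ht : t ∈ Set.Icc (0 : ℝ) 1) :
    GB n r k t =
      ((r (n + 1) - r k) / r (n + 1)) * GB (n + 1) r k t +
        (r (k + 1) / r (n + 1)) * GB (n + 1) r (k + 1) t := by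
  have hmono : ∀ i j : ℕ, i < j → j ≤ n + 1 → r i < r j := by
    intro i j
    induction j with
    | zero => omega
    | succ m ih =>
      intro hij hj
      rcases Nat.lt_succ_iff_lt_or_eq.mp hij with h | h
      · exact lt_trans (ih h (by omega)) (hr m (by omega))
      · subst h; exact hr i (by omega)
  have hR : (0:ℝ) < r (n + 1) := h0 ▸ hmono 0 (n+1) (by omega) le_rfl
  have hRne : r (n + 1) ≠ 0 := ne_of_gt hR
  have hRk : r k < r (n + 1) := hmono k (n+1) (by omega) le_rfl
  have hRkne : r (n + 1) - r k ≠ 0 := sub_ne_zero.mpr (ne_of_gt hRk)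
  by_cases hkn : k = n
  · subst hkn
    have h1 : GB k r k t = t ^ (r k) := by simp [GB]
    have h3 : GB (k + 1) r (k + 1) t = t ^ (r (k+1)) := by simp [GB]
    have h2 : GB (k + 1) r k t =
        - (r (k+1)) * ((t ^ (r (k+1)) - t ^ (r k)) / (r (k+1) - r k)) := by
      simp only [GB, if_neg (by omega : ¬ k = k + 1)]
      have : k + 1 - k = 1 := by omega
      rw [this]
      simp [divDiff, Finset.Ioc_self]
    rw [h1, h2, h3]
    have hd : r (k+1) - r k ≠ 0 := sub_ne_zero.mpr (ne_of_gt hRk)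
    field_simp
    ring
  · have hklt : k < n := lt_of_le_of_ne hk hkn
    set f : ℝ → ℝ := fun x => t ^ x with hf
    set m := n - k with hm
    have hm1 : n + 1 - k = m + 1 := by omega
    have hm2 : n + 1 - (k + 1) = m := by omega
    have hshift : (fun i => r (k + (i + 1))) = (fun i => r (k + 1 + i)) := by
      funext i; congr 1; omega
    have htop : k + (m + 1) = n + 1 := by omega
    have hD : divDiff f (m + 1) (fun i => r (k + i)) =
        (divDiff f m (fun i => r (k + 1 + i)) - divDiff f m (fun i => r (k + i)))
          / (r (n + 1) - r k) := by
      show (divDiff f m (fun i => r (k + (i + 1))) - divDiff f m (fun i => r (k + i)))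
          / (r (k + (m + 1)) - r (k + 0)) = _
      rw [hshift, htop]
      norm_num
    have hP1 : (∏ j ∈ Finset.Ioc k (n+1), r j) =
        (∏ j ∈ Finset.Ioc k n, r j) * r (n+1) :=
      Finset.prod_Ioc_succ_top hk _
    have hP2 : (∏ j ∈ Finset.Ioc (k+1) (n+1), r j) =
        (∏ j ∈ Finset.Ioc (k+1) n, r j) * r (n+1) :=
      Finset.prod_Ioc_succ_top hklt _
    have hP3 : (∏ j ∈ Finset.Ioc k n, r j) =
        r (k+1) * ∏ j ∈ Finset.Ioc (k+1) n, r j := by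
      rw [← Finset.Icc_add_one_left_eq_Ioc, Finset.Icc_eq_cons_Ioc (by omega : k + 1 ≤ n),
        Finset.prod_cons]
    simp only [GB, if_neg hkn, if_neg (by omega : ¬ k = n + 1),
      if_neg (by omega : ¬ k + 1 = n + 1), hm1, hm2, ← hm, ← hf]
    rw [hD, hP1, hP2, hP3, pow_succ]
    field_simp
    ring
end

section
/- Let Λ = (0=r_0, r_1, ..., r_n) be a strictly increasing sequence of real numbers and let Λ_1 = (0, 1, r_1+1, r_2+1, ..., r_n+1). Then for k = 0,...,n and all t in [0,1]: t·H^n_{k,Λ}(t) = (∏_{j=k+1}^n r_j / ∏_{j=k+1}^n (r_j+1))·H^{n+1}_{k+1,Λ_1}(t), where empty products are 1. -/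
lemma divDiff_congr (f g : ℝ → ℝ) :
    ∀ (n : ℕ) (x : ℕ → ℝ), (∀ i ≤ n, f (x i) = g (x i)) → divDiff f n x = divDiff g n x
  | 0, x, h => by simp [divDiff, h 0 (le_refl 0)]
  | n + 1, x, h => by
      simp only [divDiff]
      rw [divDiff_congr f g n (fun i => x (i + 1)) (fun i hi => h (i + 1) (by omega)),
        divDiff_congr f g n x (fun i hi => h i (by omega))]

lemma divDiff_const_mul (c : ℝ) (f : ℝ → ℝ) :
    ∀ (n : ℕ) (x : ℕ → ℝ), divDiff (fun y => c * f y) n x = c * divDiff f n x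
  | 0, x => rfl
  | n + 1, x => by
      simp only [divDiff, divDiff_const_mul c f n]
      ring

lemma divDiff_comp_add (c : ℝ) (f : ℝ → ℝ) :
    ∀ (n : ℕ) (x : ℕ → ℝ),
      divDiff (fun y => f (y + c)) n x = divDiff f n (fun i => x i + c)
  | 0, x => rfl
  | n + 1, x => by
      simp only [divDiff, divDiff_comp_add c f n]
      congr 1
      ring

/-- Lemma: `t·H^n_{k,Λ} = (∏_{j=k+1}^n r_j / ∏_{j=k+1}^n (r_j+1)) · H^{n+1}_{k+1,Λ₁}`
with `Λ₁ = (0, 1, r_1+1, ..., r_n+1)`. -/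
theorem GB_mul_t (n : ℕ) (r : ℕ → ℝ) (h0 : r 0 = 0)
    (hr : ∀ i < n, r i < r (i + 1)) (k : ℕ) (hk : k ≤ n)
    (t : ℝ) (ht : t ∈ Set.Icc (0 : ℝ) 1) :
    t * GB n r k t =
      ((∏ j ∈ Finset.Ioc k n, r j) / (∏ j ∈ Finset.Ioc k n, (r j + 1))) *
        GB (n + 1) (fun i => if i = 0 then 0 else if i = 1 then 1 else r (i - 1) + 1)
          (k + 1) t := by
  have hnn : ∀ j, j ≤ n → 0 ≤ r j := by
    intro j
    induction j with
    | zero => intro _; simp [h0]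
    | succ m ih =>
        intro hj
        have h1 := hr m (by omega)
        have h2 := ih (by omega)
        linarith
  have hmul : ∀ x : ℝ, 0 ≤ x → t * t ^ x = t ^ (x + 1) := by
    intro x hx
    rcases eq_or_lt_of_le ht.1 with h | h
    · rw [← h, Real.zero_rpow (by linarith : x + 1 ≠ 0), zero_mul]
    · rw [Real.rpow_add_one (ne_of_gt h)]; ring
  rcases eq_or_lt_of_le hk with hEq | hlt
  · subst hEq
    simp only [GB, eq_self_iff_true, if_true, Finset.Ioc_self, Finset.prod_empty]
    have hval : (if k + 1 = 0 then (0:ℝ) else if k + 1 = 1 then 1 else r (k + 1 - 1) + 1)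
        = r k + 1 := by
      rcases Nat.eq_zero_or_pos k with h | h
      · subst h; simp [h0]
      · simp only [Nat.succ_ne_zero, if_false]
        rw [if_neg (by omega)]
        simp
    rw [hval, hmul (r k) (hnn k le_rfl)]
    norm_num
  · have hne : ¬(k = n) := by omega
    have hne2 : ¬(k + 1 = n + 1) := by omega
    simp only [GB, if_neg hne, if_neg hne2, Nat.succ_sub_succ]
    have hQ : (0:ℝ) < ∏ j ∈ Finset.Ioc k n, (r j + 1) := by
      apply Finset.prod_pos
      intro j hj
      have := hnn j (Finset.mem_Ioc.mp hj).2
      linarith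
    have hprod : (∏ j ∈ Finset.Ioc (k + 1) (n + 1),
        (if j = 0 then (0:ℝ) else if j = 1 then 1 else r (j - 1) + 1))
        = ∏ j ∈ Finset.Ioc k n, (r j + 1) := by
      rw [show Finset.Ioc (k + 1) (n + 1) = Finset.Ico (k + 2) (n + 2) by
        rw [← Finset.Icc_add_one_left_eq_Ioc]; exact (Finset.Ico_add_one_right_eq_Icc ..).symm,
        show Finset.Ioc k n = Finset.Ico (k + 1) (n + 1) by
        rw [← Finset.Icc_add_one_left_eq_Ioc, Finset.Ico_add_one_right_eq_Icc],
        Finset.prod_Ico_eq_prod_range, Finset.prod_Ico_eq_prod_range]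
      have : n + 2 - (k + 2) = n + 1 - (k + 1) := by omega
      rw [this]
      apply Finset.prod_congr rfl
      intro i _
      rw [if_neg (by omega), if_neg (by omega)]
      congr 2
      omega
    have hnodes : (fun i => (if k + 1 + i = 0 then (0:ℝ)
        else if k + 1 + i = 1 then 1 else r (k + 1 + i - 1) + 1))
        = fun i => r (k + i) + 1 := by
      funext i
      rcases Nat.eq_zero_or_pos (k + i) with h | h
      · rw [if_neg (by omega), if_pos (by omega)]
        have hk0 : k = 0 := by omega
        have hi0 : i = 0 := by omega
        subst hk0; subst hi0
        simp [h0]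
      · rw [if_neg (by omega), if_neg (by omega)]
        congr 2
        omega
    have key : t * divDiff (fun x => t ^ x) (n - k) (fun i => r (k + i))
        = divDiff (fun x => t ^ x) (n - k) (fun i => r (k + i) + 1) := by
      rw [← divDiff_comp_add, ← divDiff_const_mul]
      apply divDiff_congr
      intro i hi
      exact hmul (r (k + i)) (hnn (k + i) (by omega))
    have main : ∀ (P Q D D' : ℝ), Q ≠ 0 → t * D = D' →
        t * ((-1:ℝ) ^ (n - k) * P * D) = P / Q * ((-1:ℝ) ^ (n - k) * Q * D') := by
      intro P Q D D' hQ' hD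
      subst hD
      field_simp
    rw [hprod, hnodes]
    exact main _ _ _ _ (ne_of_gt hQ) key
end

section
/- Let γ > 0 and let (a_j), (b_j), j ≥ 1, be sequences in the open interval (0,1) such that lim_{j→∞} (ln b_j)/(ln a_j) = γ. Define A_i(m) = ∏_{j=i+1}^m a_j and B_i(m) = ∏_{j=i+1}^m b_j for i < m, and assume for every fixed i that A_i(m) → 0 and B_i(m) → 0 as m → ∞. Then A_i(m)^γ - B_i(m) → 0 as m → ∞, uniformly in i; that is, for every ε > 0 there exists M such that for all m ≥ M and all i with 1 ≤ i < m, |A_i(m)^γ - B_i(m)| < ε. -/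
open Filter

lemma abs_one_sub_exp_le (w : ℝ) : |1 - Real.exp w| ≤ Real.exp |w| - 1 := by
  rcases le_or_gt 0 w with h | h
  · rw [abs_of_nonneg h, abs_of_nonpos (by linarith [Real.one_le_exp h] : 1 - Real.exp w ≤ 0)]
    linarith
  · rw [abs_of_neg h, abs_of_nonneg (by linarith [Real.exp_lt_one_iff.mpr h] : (0:ℝ) ≤ 1 - Real.exp w)]
    have h1 := Real.add_one_le_exp w
    have h2 := Real.add_one_le_exp (-w)
    linarith

theorem uniform_product_comparison (γ : ℝ) (hγ : 0 < γ) (a b : ℕ → ℝ)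
    (ha : ∀ j, 1 ≤ j → a j ∈ Set.Ioo (0 : ℝ) 1)
    (hb : ∀ j, 1 ≤ j → b j ∈ Set.Ioo (0 : ℝ) 1)
    (hlim : Tendsto (fun j => Real.log (b j) / Real.log (a j)) atTop (nhds γ))
    (hA : ∀ i : ℕ, Tendsto (fun m => ∏ j ∈ Finset.Ioc i m, a j) atTop (nhds 0))
    (hB : ∀ i : ℕ, Tendsto (fun m => ∏ j ∈ Finset.Ioc i m, b j) atTop (nhds 0)) :
    ∀ ε > 0, ∃ M : ℕ, ∀ m ≥ M, ∀ i, 1 ≤ i → i < m →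
      |(∏ j ∈ Finset.Ioc i m, a j) ^ γ - ∏ j ∈ Finset.Ioc i m, b j| < ε := by
  intro ε hε
  -- choose T large
  set T : ℝ := max 1 (2 * |Real.log (ε/2)| + 2) with hTdef
  have hT0 : (0:ℝ) < T := lt_of_lt_of_le one_pos (le_max_left _ _)
  have hTbig : Real.exp (-(T/2)) < ε/2 := by
    have h1 : -(T/2) < Real.log (ε/2) := by
      have h2 := le_max_right 1 (2 * |Real.log (ε/2)| + 2)
      have h3 := neg_abs_le (Real.log (ε/2))
      have h4 := abs_nonneg (Real.log (ε/2))
      rw [hTdef]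
      nlinarith
    calc Real.exp (-(T/2)) < Real.exp (Real.log (ε/2)) := Real.exp_lt_exp.mpr h1
      _ = ε/2 := Real.exp_log (by linarith)
  have hlog1 : 0 < Real.log (1 + ε/2) := Real.log_pos (by linarith)
  -- choose c small
  set c : ℝ := min (1/2) (Real.log (1 + ε/2) / (2*T)) with hcdef
  have hc0 : 0 < c := lt_min (by norm_num) (by positivity)
  have hc2 : c ≤ 1/2 := min_le_left _ _
  have hcT : c * T < Real.log (1 + ε/2) := by
    have h1 : c ≤ Real.log (1 + ε/2) / (2*T) := min_le_right _ _
    have h2 : c * T ≤ Real.log (1 + ε/2) / (2*T) * T :=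
      mul_le_mul_of_nonneg_right h1 hT0.le
    have h3 : Real.log (1 + ε/2) / (2*T) * T = Real.log (1 + ε/2) / 2 := by
      field_simp
    linarith
  -- choose N from hlim
  rw [Metric.tendsto_atTop] at hlim
  obtain ⟨N, hN⟩ := hlim (c * γ) (by positivity)
  -- finite part: pointwise convergence for i ≤ N
  have hsmall : ∀ᶠ m in atTop, ∀ i ∈ Finset.range (N+1),
      |(∏ j ∈ Finset.Ioc i m, a j) ^ γ| + |∏ j ∈ Finset.Ioc i m, b j| < ε := by
    rw [Filter.eventually_all_finset]
    intro i _
    have h1 : Tendsto (fun m => (∏ j ∈ Finset.Ioc i m, a j) ^ γ) atTop (nhds 0) := by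
      have := (hA i).rpow_const (p := γ) (Or.inr hγ.le)
      rwa [Real.zero_rpow hγ.ne'] at this
    have h2 : Tendsto (fun m => |(∏ j ∈ Finset.Ioc i m, a j) ^ γ|
        + |∏ j ∈ Finset.Ioc i m, b j|) atTop (nhds 0) := by
      have := h1.abs.add (hB i).abs
      simpa using this
    exact h2.eventually (gt_mem_nhds hε)
  obtain ⟨M, hM⟩ := eventually_atTop.mp hsmall
  refine ⟨M, fun m hm i hi1 him => ?_⟩
  rcases lt_or_ge i (N+1) with hiN | hiN
  · -- small i
    have h1 := hM m hm i (Finset.mem_range.mpr hiN)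
    calc |(∏ j ∈ Finset.Ioc i m, a j) ^ γ - ∏ j ∈ Finset.Ioc i m, b j|
        ≤ |(∏ j ∈ Finset.Ioc i m, a j) ^ γ| + |∏ j ∈ Finset.Ioc i m, b j| := by
          simpa [sub_eq_add_neg] using abs_add_le ((∏ j ∈ Finset.Ioc i m, a j) ^ γ)
            (-(∏ j ∈ Finset.Ioc i m, b j))
      _ < ε := h1
  · -- large i : uniform bound
    set s := Finset.Ioc i m with hs
    have hsne : s.Nonempty := ⟨m, Finset.mem_Ioc.mpr ⟨him, le_refl m⟩⟩
    have hmem : ∀ j ∈ s, 1 ≤ j ∧ N ≤ j := by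
      intro j hj
      obtain ⟨hj1, _⟩ := Finset.mem_Ioc.mp hj
      exact ⟨le_trans hi1 hj1.le, le_trans (by omega) hj1.le⟩
    have haj : ∀ j ∈ s, 0 < a j ∧ a j < 1 := fun j hj => (ha j (hmem j hj).1)
    have hbj : ∀ j ∈ s, 0 < b j ∧ b j < 1 := fun j hj => (hb j (hmem j hj).1)
    have hA0 : 0 < ∏ j ∈ s, a j := Finset.prod_pos (fun j hj => (haj j hj).1)
    have hB0 : 0 < ∏ j ∈ s, b j := Finset.prod_pos (fun j hj => (hbj j hj).1)
    have hlogneg : ∀ j ∈ s, Real.log (a j) < 0 :=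
      fun j hj => Real.log_neg (haj j hj).1 (haj j hj).2
    have hsumneg : (∑ j ∈ s, Real.log (a j)) < 0 := Finset.sum_neg hlogneg hsne
    set t : ℝ := γ * (-(∑ j ∈ s, Real.log (a j))) with ht
    have ht0 : 0 < t := by
      apply mul_pos hγ; linarith
    -- key estimate on logs
    have hkey : |(∑ j ∈ s, Real.log (b j)) - γ * ∑ j ∈ s, Real.log (a j)| ≤ c * t := by
      have h1 : (∑ j ∈ s, Real.log (b j)) - γ * ∑ j ∈ s, Real.log (a j)
          = ∑ j ∈ s, (Real.log (b j) - γ * Real.log (a j)) := by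
        rw [Finset.sum_sub_distrib, Finset.mul_sum]
      rw [h1]
      calc |∑ j ∈ s, (Real.log (b j) - γ * Real.log (a j))|
          ≤ ∑ j ∈ s, |Real.log (b j) - γ * Real.log (a j)| :=
            Finset.abs_sum_le_sum_abs _ _
        _ ≤ ∑ j ∈ s, (c * γ) * (-(Real.log (a j))) := by
            apply Finset.sum_le_sum
            intro j hj
            have hlne : Real.log (a j) ≠ 0 := (hlogneg j hj).ne
            have hdist := hN j (hmem j hj).2
            rw [Real.dist_eq] at hdist
            have heq : Real.log (b j) - γ * Real.log (a j)
                = (Real.log (b j) / Real.log (a j) - γ) * Real.log (a j) := by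
              field_simp
            rw [heq, abs_mul, abs_of_neg (hlogneg j hj)]
            exact mul_le_mul_of_nonneg_right hdist.le (by linarith [hlogneg j hj])
        _ = (c * γ) * (-(∑ j ∈ s, Real.log (a j))) := by
            rw [← Finset.mul_sum, ← Finset.sum_neg_distrib]
        _ = c * t := by rw [ht]; ring
    -- exponential form
    have hlogA : Real.log (∏ j ∈ s, a j) = ∑ j ∈ s, Real.log (a j) :=
      Real.log_prod (fun j hj => (haj j hj).1.ne')
    have hlogB : Real.log (∏ j ∈ s, b j) = ∑ j ∈ s, Real.log (b j) :=
      Real.log_prod (fun j hj => (hbj j hj).1.ne')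
    set u : ℝ := γ * ∑ j ∈ s, Real.log (a j) with hu
    set v : ℝ := ∑ j ∈ s, Real.log (b j) with hv
    have hut : u = -t := by rw [hu, ht]; ring
    have hAexp : (∏ j ∈ s, a j) ^ γ = Real.exp u := by
      rw [Real.rpow_def_of_pos hA0, hlogA, mul_comm]
    have hBexp : (∏ j ∈ s, b j) = Real.exp v := by
      rw [← hlogB, Real.exp_log hB0]
    rw [hAexp, hBexp]
    have hbound : |Real.exp u - Real.exp v| ≤ Real.exp (-t) * (Real.exp (c * t) - 1) := by
      have hev : Real.exp v = Real.exp u * Real.exp (v - u) := by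
        rw [← Real.exp_add]; ring_nf
      calc |Real.exp u - Real.exp v|
          = Real.exp u * |1 - Real.exp (v - u)| := by
            rw [hev, ← mul_one_sub, abs_mul, abs_of_pos (Real.exp_pos u)]
        _ ≤ Real.exp u * (Real.exp |v - u| - 1) :=
            mul_le_mul_of_nonneg_left (abs_one_sub_exp_le _) (Real.exp_pos u).le
        _ ≤ Real.exp u * (Real.exp (c * t) - 1) := by
            apply mul_le_mul_of_nonneg_left _ (Real.exp_pos _).le
            have h5 := Real.exp_le_exp.mpr hkey
            linarith
        _ = Real.exp (-t) * (Real.exp (c * t) - 1) := by rw [hut]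
    have hfinal : Real.exp (-t) * (Real.exp (c * t) - 1) < ε := by
      rcases le_or_gt t T with htT | htT
      · have h1 : Real.exp (-t) ≤ 1 := Real.exp_le_one_iff.mpr (by linarith)
        have h2 : Real.exp (c * t) ≤ Real.exp (c * T) :=
          Real.exp_le_exp.mpr (mul_le_mul_of_nonneg_left htT hc0.le)
        have h3 : Real.exp (c * T) < 1 + ε/2 := by
          calc Real.exp (c * T) < Real.exp (Real.log (1 + ε/2)) := Real.exp_lt_exp.mpr hcT
            _ = 1 + ε/2 := Real.exp_log (by linarith)
        have h4 : (0:ℝ) ≤ Real.exp (c*t) - 1 := by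
          have := Real.one_le_exp (by positivity : (0:ℝ) ≤ c * t); linarith
        nlinarith [Real.exp_pos (-t)]
      · have h1 : Real.exp (-t) * (Real.exp (c * t) - 1)
            ≤ Real.exp (-t) * Real.exp (c * t) := by
          apply mul_le_mul_of_nonneg_left _ (Real.exp_pos _).le
          linarith [Real.exp_pos (c*t)]
        have h2 : Real.exp (-t) * Real.exp (c * t) = Real.exp (c * t - t) := by
          rw [← Real.exp_add]; ring_nf
        have h3 : c * t - t ≤ -(T/2) := by nlinarith
        have h4 : Real.exp (c * t - t) ≤ Real.exp (-(T/2)) := Real.exp_le_exp.mpr h3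
        linarith
    linarith [hbound, hfinal]
end

section
/- Let 0 = r_0 < r_1 < r_2 < ... be a strictly increasing sequence of positive reals with r_s → ∞ and ∑_{i≥1} 1/r_i = ∞. For each m, define η_i(Λ_m) = ∏_{j=i+1}^m (1 - r_1/r_j) for 1 ≤ i ≤ m-1, η_0(Λ_m) = 0, η_m(Λ_m) = 1. Then the point sets D_m = {η_i(Λ_m)^{1/r_1} : i = 0,...,m} become dense in [0,1] as m → ∞: for every x_0 in [0,1] and ε > 0, there exists m_0 such that for all m ≥ m_0 there is an index i ≤ m with |x_0 - η_i(Λ_m)^{1/r_1}| < ε. -/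
open Filter

/-- `η_i(Λ_m) = ∏_{j=i+1}^m (1 - r_1/r_j)` for `1 ≤ i ≤ m-1`, with `η_0 = 0`
and `η_m = 1` (the empty product). -/
noncomputable def eta (r : ℕ → ℝ) (m i : ℕ) : ℝ :=
  if i = 0 then 0 else ∏ j ∈ Finset.Ioc i m, (1 - r 1 / r j)

theorem eta_dense (r : ℕ → ℝ) (h0 : r 0 = 0) (hmono : StrictMono r)
    (hinf : Tendsto r atTop atTop)
    (hdiv : Tendsto (fun m => ∑ j ∈ Finset.Icc 1 m, 1 / r j) atTop atTop) :
    ∀ x₀ ∈ Set.Icc (0 : ℝ) 1, ∀ ε > 0, ∃ m₀ : ℕ, ∀ m ≥ m₀, ∃ i ≤ m,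
      |x₀ - (eta r m i) ^ (1 / r 1)| < ε := by
  have hr1 : 0 < r 1 := h0 ▸ hmono (by norm_num : (0:ℕ) < 1)
  have hrpos : ∀ j : ℕ, 1 ≤ j → 0 < r j := fun j hj =>
    lt_of_lt_of_le hr1 (hmono.monotone hj)
  have hterm : ∀ j : ℕ, 2 ≤ j → 0 < 1 - r 1 / r j := by
    intro j hj
    have h1 : r 1 < r j := hmono (by omega)
    have : r 1 / r j < 1 := (div_lt_one (hrpos j (by omega))).mpr h1
    linarith
  have hterm1 : ∀ j : ℕ, 1 ≤ j → 1 - r 1 / r j ≤ 1 := by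
    intro j hj
    have : 0 < r 1 / r j := div_pos hr1 (hrpos j hj)
    linarith
  -- basic eta facts
  have heta_pos : ∀ m i : ℕ, 1 ≤ i → 0 < eta r m i := by
    intro m i hi
    rw [eta, if_neg (by omega)]
    exact Finset.prod_pos fun j hj => hterm j (by
      have := (Finset.mem_Ioc.mp hj).1; omega)
  have heta_le_one : ∀ m i : ℕ, 1 ≤ i → eta r m i ≤ 1 := by
    intro m i hi
    rw [eta, if_neg (by omega)]
    apply Finset.prod_le_one
    · intro j hj
      exact (hterm j (by have := (Finset.mem_Ioc.mp hj).1; omega)).le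
    · intro j hj
      exact hterm1 j (by have := (Finset.mem_Ioc.mp hj).1; omega)
  have heta_top : ∀ m : ℕ, 1 ≤ m → eta r m m = 1 := by
    intro m hm
    rw [eta, if_neg (by omega), Finset.Ioc_self, Finset.prod_empty]
  have heta_succ : ∀ m i : ℕ, 1 ≤ i → i < m →
      eta r m i = (1 - r 1 / r (i + 1)) * eta r m (i + 1) := by
    intro m i hi him
    rw [eta, eta, if_neg (by omega), if_neg (by omega)]
    have h1 : Finset.Ioc i m = insert (i + 1) (Finset.Ioc (i + 1) m) := by
      rw [Finset.Ioc_insert_left (by omega), Finset.Icc_add_one_left_eq_Ioc]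
    rw [h1, Finset.prod_insert (by simp)]
  -- eta r m N → 0 as m → ∞ for fixed N ≥ 1
  have heta_zero : ∀ N : ℕ, 1 ≤ N →
      Tendsto (fun m => eta r m N) atTop (nhds 0) := by
    intro N hN
    have hsum : Tendsto (fun m => ∑ j ∈ Finset.Ioc N m, r 1 / r j) atTop atTop := by
      have key : ∀ m : ℕ, N ≤ m → ∑ j ∈ Finset.Ioc N m, r 1 / r j
          = r 1 * ((∑ j ∈ Finset.Icc 1 m, 1 / r j) - ∑ j ∈ Finset.Icc 1 N, 1 / r j) := by
        intro m hm
        have h2 : (∑ j ∈ Finset.Ioc 0 N, 1 / r j) + ∑ j ∈ Finset.Ioc N m, 1 / r j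
            = ∑ j ∈ Finset.Ioc 0 m, 1 / r j :=
          Finset.sum_Ioc_consecutive _ (Nat.zero_le N) hm
        have e1 : Finset.Icc 1 m = Finset.Ioc 0 m := Finset.Icc_add_one_left_eq_Ioc 0 m
        have e2 : Finset.Icc 1 N = Finset.Ioc 0 N := Finset.Icc_add_one_left_eq_Ioc 0 N
        rw [e1, e2, ← h2, add_sub_cancel_left, Finset.mul_sum]
        exact Finset.sum_congr rfl fun j _ => (mul_one_div (r 1) (r j)).symm
      have : Tendsto (fun m => r 1 * ((∑ j ∈ Finset.Icc 1 m, 1 / r j)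
          - ∑ j ∈ Finset.Icc 1 N, 1 / r j)) atTop atTop := by
        apply Tendsto.const_mul_atTop hr1
        exact hdiv.atTop_add tendsto_const_nhds
      refine this.congr' ?_
      filter_upwards [eventually_ge_atTop N] with m hm
      exact (key m hm).symm
    have hub : ∀ m : ℕ, eta r m N ≤ Real.exp (-(∑ j ∈ Finset.Ioc N m, r 1 / r j)) := by
      intro m
      rw [eta, if_neg (by omega)]
      calc ∏ j ∈ Finset.Ioc N m, (1 - r 1 / r j)
          ≤ ∏ j ∈ Finset.Ioc N m, Real.exp (-(r 1 / r j)) := by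
            apply Finset.prod_le_prod
            · intro j hj
              exact (hterm j (by have := (Finset.mem_Ioc.mp hj).1; omega)).le
            · intro j hj
              have := Real.add_one_le_exp (-(r 1 / r j))
              linarith
        _ = Real.exp (-(∑ j ∈ Finset.Ioc N m, r 1 / r j)) := by
            rw [← Real.exp_sum]
            simp [Finset.sum_neg_distrib]
    have hlb : ∀ m : ℕ, 0 ≤ eta r m N := fun m => (heta_pos m N hN).le
    have hexp : Tendsto (fun m => Real.exp (-(∑ j ∈ Finset.Ioc N m, r 1 / r j)))
        atTop (nhds 0) := Real.tendsto_exp_atBot.comp (tendsto_neg_atTop_atBot.comp hsum)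
    exact squeeze_zero hlb hub hexp
  -- ratio tends to 1
  have hratio : Tendsto (fun i : ℕ => (1 - r 1 / r (i + 1)) ^ (1 / r 1)) atTop (nhds 1) := by
    have h1 : Tendsto (fun i : ℕ => r 1 / r (i + 1)) atTop (nhds 0) := by
      apply Tendsto.div_atTop tendsto_const_nhds
      exact hinf.comp (tendsto_add_atTop_nat 1)
    have h2 : Tendsto (fun i : ℕ => 1 - r 1 / r (i + 1)) atTop (nhds 1) := by
      have := (tendsto_const_nhds (x := (1:ℝ)) (f := atTop)).sub h1
      simpa using this
    have h3 : ContinuousAt (fun t : ℝ => t ^ (1 / r 1)) 1 :=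
      Real.continuousAt_rpow_const 1 (1 / r 1) (Or.inl one_ne_zero)
    have := h3.tendsto.comp h2
    simpa [Function.comp_def] using this
  -- main argument
  intro x₀ hx₀ ε hε
  obtain ⟨hx0, hx1⟩ := hx₀
  obtain ⟨N₀, hN₀⟩ := (eventually_atTop.mp
    (hratio.eventually (eventually_gt_nhds (by linarith : (1:ℝ) - ε/2 < 1))))
  set N := max N₀ 1 with hNdef
  have hN1 : 1 ≤ N := le_max_right _ _
  have hzero : Tendsto (fun m => (eta r m N) ^ (1 / r 1)) atTop (nhds 0) := by
    have hc : ContinuousAt (fun t : ℝ => t ^ (1 / r 1)) 0 :=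
      Real.continuousAt_rpow_const 0 (1 / r 1) (Or.inr (by positivity))
    have := hc.tendsto.comp (heta_zero N hN1)
    simpa [Function.comp_def, Real.zero_rpow (inv_ne_zero hr1.ne')] using this
  obtain ⟨m₁, hm₁⟩ := (eventually_atTop.mp
    (hzero.eventually (eventually_lt_nhds (by linarith : (0:ℝ) < ε/2))))
  refine ⟨max m₁ (N + 1), fun m hm => ?_⟩
  have hmN : N < m := lt_of_lt_of_le (Nat.lt_succ_self N) (le_trans (le_max_right _ _) hm)
  have hm1' : m₁ ≤ m := le_trans (le_max_left _ _) hm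
  set x : ℕ → ℝ := fun i => (eta r m i) ^ (1 / r 1) with hxdef
  have hxN : x N < ε / 2 := hm₁ m hm1'
  have hx_le_one : ∀ i : ℕ, 1 ≤ i → x i ≤ 1 := fun i hi =>
    Real.rpow_le_one (heta_pos m i hi).le (heta_le_one m i hi) (by positivity)
  have hx_nonneg : ∀ i : ℕ, 0 ≤ x i := fun i => Real.rpow_nonneg (by
    rcases Nat.eq_zero_or_pos i with h | h
    · simp [hxdef, eta, h]
    · exact (heta_pos m i h).le) _
  -- gap bound
  have hgap : ∀ k : ℕ, N ≤ k → k < m → x (k + 1) - x k < ε / 2 := by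
    intro k hk hkm
    have hk1 : 1 ≤ k := le_trans hN1 hk
    have hsucc := heta_succ m k hk1 hkm
    have hc0 : 0 ≤ 1 - r 1 / r (k + 1) := (hterm (k + 1) (by omega)).le
    have hxk : x k = (1 - r 1 / r (k + 1)) ^ (1 / r 1) * x (k + 1) := by
      rw [hxdef]
      simp only
      rw [hsucc, Real.mul_rpow hc0 (heta_pos m (k + 1) (by omega)).le]
    have hcr : 1 - ε / 2 < (1 - r 1 / r (k + 1)) ^ (1 / r 1) :=
      hN₀ k (le_trans (le_max_left _ _) hk)
    have hcr1 : (1 - r 1 / r (k + 1)) ^ (1 / r 1) ≤ 1 :=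
      Real.rpow_le_one hc0 (hterm1 (k + 1) (by omega)) (by positivity)
    have h1 : x (k + 1) - x k = x (k + 1) * (1 - (1 - r 1 / r (k + 1)) ^ (1 / r 1)) := by
      rw [hxk]; ring
    have h2 : x (k + 1) * (1 - (1 - r 1 / r (k + 1)) ^ (1 / r 1))
        ≤ 1 * (1 - (1 - r 1 / r (k + 1)) ^ (1 / r 1)) :=
      mul_le_mul_of_nonneg_right (hx_le_one (k + 1) (by omega)) (by linarith)
    rw [h1]
    calc x (k + 1) * (1 - (1 - r 1 / r (k + 1)) ^ (1 / r 1))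
        ≤ 1 * (1 - (1 - r 1 / r (k + 1)) ^ (1 / r 1)) := h2
      _ < ε / 2 := by linarith
  by_cases hcase : x₀ ≤ x N
  · refine ⟨N, hmN.le, ?_⟩
    have : |x₀ - x N| = x N - x₀ := by rw [abs_sub_comm, abs_of_nonneg (by linarith)]
    rw [this]
    linarith
  · push_neg at hcase
    have hxm1 : x m = 1 := by
      rw [hxdef]; simp only
      rw [heta_top m (by omega), Real.one_rpow]
    set S := (Finset.Icc N m).filter (fun i => x₀ ≤ x i) with hSdef
    have hSne : S.Nonempty := ⟨m, by
      simp only [hSdef, Finset.mem_filter, Finset.mem_Icc]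
      exact ⟨⟨hmN.le, le_refl m⟩, by rw [hxm1]; exact hx1⟩⟩
    set i := S.min' hSne with hidef
    have hiS : i ∈ S := S.min'_mem hSne
    obtain ⟨hiIcc, hix⟩ : (N ≤ i ∧ i ≤ m) ∧ x₀ ≤ x i := by
      have := hiS
      simp only [hSdef, Finset.mem_filter, Finset.mem_Icc] at this
      exact this
    have hiN : N < i := by
      rcases Nat.lt_or_ge N i with h | h
      · exact h
      · exfalso
        have : i = N := le_antisymm (by omega) hiIcc.1
        rw [this] at hix
        linarith
    have hprev : x (i - 1) < x₀ := by
      by_contra hcon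
      push_neg at hcon
      have hmem : i - 1 ∈ S := by
        simp only [hSdef, Finset.mem_filter, Finset.mem_Icc]
        exact ⟨⟨by omega, by omega⟩, hcon⟩
      have := S.min'_le _ hmem
      omega
    refine ⟨i, hiIcc.2, ?_⟩
    have hk : i - 1 + 1 = i := by omega
    have hgapi : x i - x (i - 1) < ε / 2 := by
      have := hgap (i - 1) (by omega) (by omega)
      rwa [hk] at this
    have : |x₀ - x i| = x i - x₀ := by rw [abs_sub_comm, abs_of_nonneg (by linarith)]
    rw [this]
    linarith
end

section
/- Let L^m_i(x) = ∑ nonnegative basis functions with ∑_{i=0}^m L^m_i(x) = 1 on [0,1], and let ξ_0 < ξ_1 < ... < ξ_m be nodes in [0,1]. Suppose that for every continuous f on [0,1], the operator B_m(f)(x) = ∑_{i=0}^m f(ξ_i) L^m_i(x) converges uniformly to f. Then the node sets {ξ_i : i = 0,...,m} become dense in [0,1] as m → ∞: for every x_0 ∈ [0,1] and ε > 0, there is m_0 such that for all m ≥ m_0 some node ξ_i satisfies |x_0 - ξ_i| < ε. -/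
open Filter

theorem nodes_dense (L : ℕ → ℕ → ℝ → ℝ) (ξ : ℕ → ℕ → ℝ)
    (hLpos : ∀ m, ∀ i ≤ m, ∀ x ∈ Set.Icc (0 : ℝ) 1, 0 ≤ L m i x)
    (hLsum : ∀ m, ∀ x ∈ Set.Icc (0 : ℝ) 1, ∑ i ∈ Finset.range (m + 1), L m i x = 1)
    (hξmem : ∀ m, ∀ i ≤ m, ξ m i ∈ Set.Icc (0 : ℝ) 1)
    (hξmono : ∀ m, ∀ i j : ℕ, i < j → j ≤ m → ξ m i < ξ m j)
    (happrox : ∀ f : ℝ → ℝ, ContinuousOn f (Set.Icc 0 1) →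
      TendstoUniformlyOn
        (fun m x => ∑ i ∈ Finset.range (m + 1), f (ξ m i) * L m i x) f atTop
        (Set.Icc 0 1)) :
    ∀ x₀ ∈ Set.Icc (0 : ℝ) 1, ∀ ε > 0, ∃ m₀ : ℕ, ∀ m ≥ m₀, ∃ i ≤ m,
      |x₀ - ξ m i| < ε := by
  intro x₀ hx₀ ε hε
  set f : ℝ → ℝ := fun x => |x - x₀| with hf
  have hcont : ContinuousOn f (Set.Icc 0 1) :=
    ((continuous_id.sub continuous_const).abs).continuousOn
  have h := (Metric.tendstoUniformlyOn_iff.mp (happrox f hcont)) ε hε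
  rw [eventually_atTop] at h
  obtain ⟨m₀, hm₀⟩ := h
  refine ⟨m₀, fun m hm => ?_⟩
  by_contra hcon
  push_neg at hcon
  have hx := hm₀ m hm x₀ hx₀
  -- the sum is ≥ ε
  have hsum : ε ≤ ∑ i ∈ Finset.range (m + 1), f (ξ m i) * L m i x₀ := by
    calc ε = ∑ i ∈ Finset.range (m + 1), ε * L m i x₀ := by
            rw [← Finset.mul_sum, hLsum m x₀ hx₀, mul_one]
      _ ≤ _ := by
            apply Finset.sum_le_sum
            intro i hi
            have hi' : i ≤ m := Nat.lt_succ_iff.mp (Finset.mem_range.mp hi)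
            have hL := hLpos m i hi' x₀ hx₀
            have : ε ≤ f (ξ m i) := by
              have := hcon i hi'
              simpa [hf, abs_sub_comm] using this
            exact mul_le_mul_of_nonneg_right this hL
  have : f x₀ = 0 := by simp [hf]
  rw [this, dist_eq_norm] at hx
  have : |∑ i ∈ Finset.range (m + 1), f (ξ m i) * L m i x₀| < ε := by
    simpa using hx
  linarith [le_abs_self (∑ i ∈ Finset.range (m + 1), f (ξ m i) * L m i x₀)]
end

section
/- Let P be a polynomial of degree at most n, and for m ≥ n write P(t) = ∑_{i=0}^m b_i^m B_i^m(t) in the Bernstein basis of degree m on [0,1]. Then max_{0≤i≤m} |b_i^m - P(i/m)| = O(1/m) as m → ∞; i.e., there is a constant C depending only on P such that max_i |b_i^m - P(i/m)| ≤ C/m for all m ≥ n. -/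
/-- The Bernstein basis polynomial `B_i^m(t) = C(m,i) t^i (1-t)^(m-i)`. -/
noncomputable def bern (m i : ℕ) (t : ℝ) : ℝ :=
  (m.choose i : ℝ) * t ^ i * (1 - t) ^ (m - i)

open Polynomial Finset

noncomputable def bernP (m i : ℕ) : Polynomial ℝ :=
  Polynomial.C (m.choose i : ℝ) * Polynomial.X ^ i * (1 - Polynomial.X) ^ (m - i)

lemma bernP_eval (m i : ℕ) (t : ℝ) : (bernP m i).eval t = bern m i t := by
  simp [bernP, bern]

lemma bernP_coeff_lt (m i j : ℕ) (h : j < i) : (bernP m i).coeff j = 0 := by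
  have h2 : bernP m i = (Polynomial.C (m.choose i : ℝ) * (1 - Polynomial.X) ^ (m - i)) * Polynomial.X ^ i := by
    rw [bernP]; ring
  rw [h2, Polynomial.coeff_mul_X_pow', if_neg (by omega)]

lemma bernP_coeff_self (m i : ℕ) : (bernP m i).coeff i = (m.choose i : ℝ) := by
  have h2 : bernP m i = (Polynomial.C (m.choose i : ℝ) * (1 - Polynomial.X) ^ (m - i)) * Polynomial.X ^ i := by
    rw [bernP]; ring
  rw [h2, Polynomial.coeff_mul_X_pow', if_pos le_rfl]
  simp [Polynomial.coeff_zero_eq_eval_zero]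

lemma bern_unique (m : ℕ) (c : ℕ → ℝ)
    (h : ∀ t : ℝ, ∑ i ∈ range (m+1), c i * bern m i t = 0) :
    ∀ j, j ≤ m → c j = 0 := by
  have hQ : ∑ i ∈ range (m+1), Polynomial.C (c i) * bernP m i = 0 := by
    apply Polynomial.funext
    intro t
    simpa [Polynomial.eval_finset_sum, bernP_eval] using h t
  intro j
  induction j using Nat.strong_induction_on with
  | _ j ih =>
    intro hj
    have h0 : (∑ i ∈ range (m+1), Polynomial.C (c i) * bernP m i).coeff j = 0 := by
      rw [hQ]; simp
    rw [Polynomial.finset_sum_coeff] at h0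
    simp only [Polynomial.coeff_C_mul] at h0
    rw [Finset.sum_eq_single_of_mem j (by simp; omega)
      (fun i _ hij => by
        rcases lt_or_gt_of_ne hij with hlt | hgt
        · rw [ih i hlt (by omega)]; ring
        · rw [bernP_coeff_lt m i j hgt]; ring)] at h0
    rw [bernP_coeff_self] at h0
    have hc : (m.choose j : ℝ) ≠ 0 := by
      exact_mod_cast (Nat.choose_pos hj).ne'
    exact (mul_eq_zero.mp h0).resolve_right hc

lemma sum_choose_bern (m k : ℕ) (hk : k ≤ m) (t : ℝ) :
    ∑ i ∈ range (m+1), (i.choose k : ℝ) * bern m i t = (m.choose k : ℝ) * t ^ k := by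
  have h1 : ∑ i ∈ Finset.Ico k (m+1), (i.choose k : ℝ) * bern m i t
      = ∑ i ∈ range (m+1), (i.choose k : ℝ) * bern m i t := by
    apply Finset.sum_subset
    · intro x hx; simp only [Finset.mem_Ico] at hx; simp only [Finset.mem_range]; omega
    · intro x hx hxn
      have hlt : x < k := by
        simp only [Finset.mem_range] at hx
        simp only [Finset.mem_Ico] at hxn
        omega
      simp [Nat.choose_eq_zero_of_lt hlt]
  rw [← h1, Finset.sum_Ico_eq_sum_range]
  have hm : m + 1 - k = (m - k) + 1 := by omega
  rw [hm]
  have key : ∀ j ∈ range (m - k + 1),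
      ((k + j).choose k : ℝ) * bern m (k + j) t
        = (m.choose k : ℝ) * t ^ k * (t ^ j * (1 - t) ^ ((m-k) - j) * (((m-k).choose j : ℝ))) := by
    intro j hj
    simp only [Finset.mem_range] at hj
    have hjm : k + j ≤ m := by omega
    have hnat : m.choose (k+j) * (k+j).choose k = m.choose k * (m-k).choose j := by
      have h3 := Nat.choose_mul (n := m) (Nat.le_add_right k j)
      simpa using h3
    have hcast : (m.choose (k+j) : ℝ) * ((k+j).choose k : ℝ) = (m.choose k : ℝ) * ((m-k).choose j : ℝ) := by
      exact_mod_cast congrArg (fun x : ℕ => (x : ℝ)) hnat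
    rw [bern]
    have hexp : m - (k + j) = (m - k) - j := by omega
    rw [hexp, pow_add]
    linear_combination (t ^ k * t ^ j * (1 - t) ^ ((m-k) - j)) * hcast
  rw [Finset.sum_congr rfl key, ← Finset.mul_sum, ← add_pow]
  norm_num

lemma abs_prod_sub (k : ℕ) (a c : ℕ → ℝ)
    (ha : ∀ j < k, 0 ≤ a j ∧ a j ≤ 1) (hc : ∀ j < k, 0 ≤ c j ∧ c j ≤ 1) :
    |∏ j ∈ range k, a j - ∏ j ∈ range k, c j| ≤ ∑ j ∈ range k, |a j - c j| := by
  induction k with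
  | zero => simp
  | succ k ih =>
    rw [prod_range_succ, prod_range_succ, sum_range_succ]
    have ihk := ih (fun j hj => ha j (hj.trans (Nat.lt_succ_self k)))
      (fun j hj => hc j (hj.trans (Nat.lt_succ_self k)))
    have hA : |∏ j ∈ range k, a j| ≤ 1 := by
      rw [abs_le]
      constructor
      · linarith [Finset.prod_nonneg (fun j hj => (ha j (Nat.lt_succ_of_lt (Finset.mem_range.mp hj))).1)]
      · exact Finset.prod_le_one (fun j hj => (ha j (Nat.lt_succ_of_lt (Finset.mem_range.mp hj))).1)
          (fun j hj => (ha j (Nat.lt_succ_of_lt (Finset.mem_range.mp hj))).2)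
    have hC : |∏ j ∈ range k, c j| ≤ 1 := by
      rw [abs_le]
      constructor
      · linarith [Finset.prod_nonneg (fun j hj => (hc j (Nat.lt_succ_of_lt (Finset.mem_range.mp hj))).1)]
      · exact Finset.prod_le_one (fun j hj => (hc j (Nat.lt_succ_of_lt (Finset.mem_range.mp hj))).1)
          (fun j hj => (hc j (Nat.lt_succ_of_lt (Finset.mem_range.mp hj))).2)
    have hak : |a k| ≤ 1 := by
      rw [abs_le]; have := ha k (Nat.lt_succ_self k); constructor <;> linarith [this.1, this.2]
    calc |(∏ j ∈ range k, a j) * a k - (∏ j ∈ range k, c j) * c k|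
        = |((∏ j ∈ range k, a j) - ∏ j ∈ range k, c j) * a k
            + (∏ j ∈ range k, c j) * (a k - c k)| := by ring_nf
      _ ≤ |((∏ j ∈ range k, a j) - ∏ j ∈ range k, c j) * a k|
            + |(∏ j ∈ range k, c j) * (a k - c k)| := abs_add_le _ _
      _ = |(∏ j ∈ range k, a j) - ∏ j ∈ range k, c j| * |a k|
            + |∏ j ∈ range k, c j| * |a k - c k| := by rw [abs_mul, abs_mul]
      _ ≤ (∑ j ∈ range k, |a j - c j|) + |a k - c k| := by
          have h1 : |(∏ j ∈ range k, a j) - ∏ j ∈ range k, c j| * |a k|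
              ≤ ∑ j ∈ range k, |a j - c j| := by
            calc |(∏ j ∈ range k, a j) - ∏ j ∈ range k, c j| * |a k|
                ≤ |(∏ j ∈ range k, a j) - ∏ j ∈ range k, c j| * 1 :=
                  mul_le_mul_of_nonneg_left hak (abs_nonneg _)
              _ = _ := mul_one _
              _ ≤ _ := ihk
          have h2 : |∏ j ∈ range k, c j| * |a k - c k| ≤ |a k - c k| := by
            calc |∏ j ∈ range k, c j| * |a k - c k| ≤ 1 * |a k - c k| :=
              mul_le_mul_of_nonneg_right hC (abs_nonneg _)
              _ = _ := one_mul _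
          linarith

lemma term_bound (n m i k j : ℕ) (hk : k ≤ n) (hnm : n ≤ m) (him : i ≤ m)
    (hj : j < k) :
    |((i - j : ℕ) : ℝ) / ((m - j : ℕ) : ℝ) - (i : ℝ) / m| ≤ (n * (n+1) : ℝ) / m := by
  have hm1 : (1:ℝ) ≤ m := by exact_mod_cast Nat.one_le_iff_ne_zero.mpr (by omega)
  have hmpos : (0:ℝ) < m := by linarith
  have hmj : 0 < m - j := by omega
  have hmjR : (0:ℝ) < ((m - j : ℕ) : ℝ) := by exact_mod_cast hmj
  rcases le_or_gt j i with hji | hij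
  · -- j ≤ i case
    have hsub1 : ((i - j : ℕ) : ℝ) = (i:ℝ) - j := by
      rw [Nat.cast_sub hji]
    have hsub2 : ((m - j : ℕ) : ℝ) = (m:ℝ) - j := by
      rw [Nat.cast_sub (by omega)]
    rw [hsub1, hsub2]
    have hmjR' : (0:ℝ) < (m:ℝ) - (j:ℝ) := by rw [← hsub2]; exact hmjR
    have heq : ((i:ℝ) - j) / ((m:ℝ) - j) - (i:ℝ)/m = -((j:ℝ) * ((m:ℝ) - i)) / (((m:ℝ) - j) * m) := by
      field_simp
      ring
    rw [heq, abs_div, abs_neg]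
    have hnum : |(j:ℝ) * ((m:ℝ) - i)| = (j:ℝ) * ((m:ℝ) - i) := by
      rw [abs_of_nonneg]
      apply mul_nonneg (by positivity)
      have : (i:ℝ) ≤ m := by exact_mod_cast him
      linarith
    have hden : |((m:ℝ) - j) * m| = ((m:ℝ) - j) * m := by
      rw [abs_of_nonneg]; positivity
    rw [hnum, hden, div_le_div_iff₀ (by positivity) hmpos]
    have hjn : (j:ℝ) + 1 ≤ n := by exact_mod_cast Nat.succ_le_of_lt (lt_of_lt_of_le hj hk)
    have hnmR : (n:ℝ) ≤ m := by exact_mod_cast hnm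
    have hiR : (0:ℝ) ≤ i := by positivity
    have hiM : (i:ℝ) ≤ m := by exact_mod_cast him
    have key : (j:ℝ) * ((m:ℝ) - i) ≤ (n:ℝ) * (n+1) * ((m:ℝ) - j) := by
      nlinarith [mul_nonneg (by linarith : (0:ℝ) ≤ (n:ℝ) - 1 - j) hmpos.le,
        mul_nonneg (by linarith : (0:ℝ) ≤ (n:ℝ) - 1 - j) (by positivity : (0:ℝ) ≤ (n:ℝ)^2 + n),
        mul_nonneg (by linarith : (0:ℝ) ≤ (m:ℝ) - n) (by positivity : (0:ℝ) ≤ (n:ℝ)^2 + 1),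
        mul_nonneg (by positivity : (0:ℝ) ≤ (j:ℝ)) hiR]
    nlinarith [key, hmpos]
  · -- i < j case
    have : i - j = 0 := by omega
    rw [this]
    simp only [Nat.cast_zero, zero_div, zero_sub, abs_neg]
    rw [abs_of_nonneg (by positivity)]
    have hin : (i:ℝ) ≤ (n:ℝ) * (n+1) := by
      have h1 : i ≤ n * (n+1) := by nlinarith [Nat.le_of_lt (lt_of_lt_of_le (hij.trans hj) hk)]
      exact_mod_cast h1
    exact (div_le_div_iff_of_pos_right hmpos).mpr hin

lemma ratio_bound (n m i k : ℕ) (hk : k ≤ n) (hnm : n ≤ m) (him : i ≤ m) :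
    |(i.choose k : ℝ) / (m.choose k : ℝ) - ((i:ℝ)/m)^k| ≤ ((n:ℝ)*n*(n+1))/m := by
  rcases Nat.eq_zero_or_pos k with rfl | hkpos
  · simp
    positivity
  have hm1 : 1 ≤ m := hkpos.trans_le (hk.trans hnm)
  have hmpos : (0:ℝ) < m := by exact_mod_cast hm1
  have hfac : (k.factorial : ℝ) ≠ 0 := by exact_mod_cast k.factorial_ne_zero
  have hdi : (i.descFactorial k : ℝ) = (k.factorial : ℝ) * (i.choose k : ℝ) := by
    exact_mod_cast congrArg (fun x : ℕ => (x:ℝ)) (Nat.descFactorial_eq_factorial_mul_choose i k)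
  have hdm : (m.descFactorial k : ℝ) = (k.factorial : ℝ) * (m.choose k : ℝ) := by
    exact_mod_cast congrArg (fun x : ℕ => (x:ℝ)) (Nat.descFactorial_eq_factorial_mul_choose m k)
  have hchoose : (i.choose k : ℝ)/(m.choose k : ℝ)
      = (i.descFactorial k : ℝ)/(m.descFactorial k : ℝ) := by
    rw [hdi, hdm, mul_div_mul_left _ _ hfac]
  have hpi : (i.descFactorial k : ℝ) = ∏ j ∈ range k, ((i - j : ℕ) : ℝ) := by
    rw [Nat.descFactorial_eq_prod_range]
    push_cast
    rfl
  have hpm : (m.descFactorial k : ℝ) = ∏ j ∈ range k, ((m - j : ℕ) : ℝ) := by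
    rw [Nat.descFactorial_eq_prod_range]
    push_cast
    rfl
  have hratio : (i.choose k : ℝ)/(m.choose k : ℝ)
      = ∏ j ∈ range k, ((i - j : ℕ) : ℝ) / ((m - j : ℕ) : ℝ) := by
    rw [hchoose, hpi, hpm, Finset.prod_div_distrib]
  have hpow : ((i:ℝ)/m)^k = ∏ _j ∈ range k, ((i:ℝ)/m) := by
    rw [Finset.prod_const, Finset.card_range]
  rw [hratio, hpow]
  have hden : ∀ j < k, (0:ℝ) < ((m - j : ℕ) : ℝ) := by
    intro j hj
    have : 0 < m - j := by omega
    exact_mod_cast this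
  have ha : ∀ j < k, 0 ≤ ((i - j : ℕ) : ℝ) / ((m - j : ℕ) : ℝ)
      ∧ ((i - j : ℕ) : ℝ) / ((m - j : ℕ) : ℝ) ≤ 1 := by
    intro j hj
    constructor
    · positivity
    · rw [div_le_one (hden j hj)]
      exact_mod_cast Nat.sub_le_sub_right him j
  have hc : ∀ j < k, (0:ℝ) ≤ (i:ℝ)/m ∧ (i:ℝ)/m ≤ 1 := by
    intro j hj
    constructor
    · positivity
    · rw [div_le_one hmpos]; exact_mod_cast him
  calc |∏ j ∈ range k, ((i - j : ℕ) : ℝ) / ((m - j : ℕ) : ℝ) - ∏ _j ∈ range k, ((i:ℝ)/m)|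
      ≤ ∑ j ∈ range k, |((i - j : ℕ) : ℝ) / ((m - j : ℕ) : ℝ) - (i:ℝ)/m| :=
        abs_prod_sub k _ _ ha hc
    _ ≤ ∑ _j ∈ range k, ((n:ℝ) * (n+1))/m := by
        apply Finset.sum_le_sum
        intro j hj
        exact term_bound n m i k j hk hnm him (Finset.mem_range.mp hj)
    _ = (k:ℝ) * (((n:ℝ) * (n+1))/m) := by rw [Finset.sum_const, Finset.card_range]; simp
    _ ≤ (n:ℝ) * (((n:ℝ) * (n+1))/m) := by
        apply mul_le_mul_of_nonneg_right _ (by positivity)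
        exact_mod_cast hk
    _ = ((n:ℝ)*n*(n+1))/m := by ring

theorem bernstein_coeff_convergence (n : ℕ) (P : Polynomial ℝ) (hP : P.natDegree ≤ n)
    (b : ℕ → ℕ → ℝ)
    (hb : ∀ m, n ≤ m → ∀ t : ℝ,
      P.eval t = ∑ i ∈ Finset.range (m + 1), b m i * bern m i t) :
    ∃ C : ℝ, ∀ m, n ≤ m → ∀ i ≤ m, |b m i - P.eval ((i : ℝ) / m)| ≤ C / m := by
  classical
  set g : ℕ → ℕ → ℝ := fun m i =>
    ∑ k ∈ Finset.range (n+1), P.coeff k * ((i.choose k : ℝ) / (m.choose k : ℝ)) with hgdef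
  have hdeg : P.natDegree < n + 1 := Nat.lt_succ_of_le hP
  have hg : ∀ m, n ≤ m → ∀ t : ℝ,
      ∑ i ∈ Finset.range (m+1), g m i * bern m i t = P.eval t := by
    intro m hm t
    have hswap : ∑ i ∈ Finset.range (m+1), g m i * bern m i t
        = ∑ k ∈ Finset.range (n+1), ∑ i ∈ Finset.range (m+1),
            P.coeff k * ((i.choose k : ℝ) / (m.choose k : ℝ)) * bern m i t := by
      rw [Finset.sum_comm]
      apply Finset.sum_congr rfl
      intro i _
      rw [hgdef]
      rw [Finset.sum_mul]
    rw [hswap]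
    have hterm : ∀ k ∈ Finset.range (n+1),
        ∑ i ∈ Finset.range (m+1),
            P.coeff k * ((i.choose k : ℝ) / (m.choose k : ℝ)) * bern m i t
          = P.coeff k * t ^ k := by
      intro k hk
      have hkm : k ≤ m := by
        have := Finset.mem_range.mp hk; omega
      have hcne : (m.choose k : ℝ) ≠ 0 := by
        exact_mod_cast (Nat.choose_pos hkm).ne'
      calc ∑ i ∈ Finset.range (m+1),
              P.coeff k * ((i.choose k : ℝ) / (m.choose k : ℝ)) * bern m i t
          = (P.coeff k / (m.choose k : ℝ))
              * ∑ i ∈ Finset.range (m+1), (i.choose k : ℝ) * bern m i t := by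
            rw [Finset.mul_sum]
            apply Finset.sum_congr rfl
            intro i _
            ring
        _ = (P.coeff k / (m.choose k : ℝ)) * ((m.choose k : ℝ) * t ^ k) := by
            rw [sum_choose_bern m k hkm t]
        _ = P.coeff k * t ^ k := by
            field_simp
    rw [Finset.sum_congr rfl hterm]
    exact (Polynomial.eval_eq_sum_range' hdeg t).symm
  have hbg : ∀ m, n ≤ m → ∀ i, i ≤ m → b m i = g m i := by
    intro m hm i him
    have huniq := bern_unique m (fun i => b m i - g m i) (fun t => by
      simp only [sub_mul]
      rw [Finset.sum_sub_distrib, ← hb m hm t, hg m hm t, sub_self]) i him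
    simpa [sub_eq_zero] using huniq
  refine ⟨(∑ k ∈ Finset.range (n+1), |P.coeff k|) * ((n:ℝ)*n*(n+1)), ?_⟩
  intro m hm i him
  rw [hbg m hm i him]
  have hev : P.eval ((i:ℝ)/m) = ∑ k ∈ Finset.range (n+1), P.coeff k * ((i:ℝ)/m)^k :=
    Polynomial.eval_eq_sum_range' hdeg _
  rw [hev, hgdef]
  calc |∑ k ∈ Finset.range (n+1), P.coeff k * ((i.choose k : ℝ) / (m.choose k : ℝ))
          - ∑ k ∈ Finset.range (n+1), P.coeff k * ((i:ℝ)/m)^k|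
      = |∑ k ∈ Finset.range (n+1),
          P.coeff k * ((i.choose k : ℝ) / (m.choose k : ℝ) - ((i:ℝ)/m)^k)| := by
        rw [← Finset.sum_sub_distrib]
        congr 1
        apply Finset.sum_congr rfl
        intro k _
        ring
    _ ≤ ∑ k ∈ Finset.range (n+1),
          |P.coeff k * ((i.choose k : ℝ) / (m.choose k : ℝ) - ((i:ℝ)/m)^k)| :=
        Finset.abs_sum_le_sum_abs _ _
    _ ≤ ∑ k ∈ Finset.range (n+1), |P.coeff k| * (((n:ℝ)*n*(n+1))/m) := by
        apply Finset.sum_le_sum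
        intro k hk
        rw [abs_mul]
        apply mul_le_mul_of_nonneg_left _ (abs_nonneg _)
        exact ratio_bound n m i k (by have := Finset.mem_range.mp hk; omega) hm him
    _ = (∑ k ∈ Finset.range (n+1), |P.coeff k|) * ((n:ℝ)*n*(n+1)) / m := by
        rw [← Finset.sum_mul]
        ring
end

section
/- Let 0 = r_0 < r_1 < r_2 < ... with r_s → ∞ and ∑ 1/r_i = ∞. Fix k with 0 ≤ k, and for i and m define η^{(k)}_i(Λ_m) = ∏_{j=i+k+1}^m (1 - (r_{k+1} - r_k)/(r_j - r_k)) for 1 ≤ i ≤ m-k-1, with η^{(k)}_0 = 0 and η^{(k)}_{m-k} = 1. Then as m → ∞, η^{(k)}_{i-k}(Λ_m) - (η^{(k+1)}_{i-(k+1)}(Λ_m))^{(r_{k+1}-r_k)/(r_{k+2}-r_{k+1})} → 0 uniformly in i (with the convention that terms with negative subscripts are 0). -/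
open Filter

/-- `η^{(k)}_i(Λ_m) = ∏_{j=i+k+1}^m (1 - (r_{k+1}-r_k)/(r_j - r_k))` for
`1 ≤ i ≤ m-k-1`, with `η^{(k)}_0 = 0` and `η^{(k)}_{m-k} = 1` (empty product). -/
noncomputable def etak (r : ℕ → ℝ) (k m i : ℕ) : ℝ :=
  if i = 0 then 0
  else ∏ j ∈ Finset.Ioc (i + k) m, (1 - (r (k + 1) - r k) / (r j - r k))

/-- For `0 < u ≤ v`, `(u-v)/u ≤ log (u/v) ≤ (u-v)/v`. -/
private lemma log_div_bounds {u v : ℝ} (hu : 0 < u) (huv : u ≤ v) :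
    (u - v) / u ≤ Real.log (u / v) ∧ Real.log (u / v) ≤ (u - v) / v := by
  have hv : 0 < v := lt_of_lt_of_le hu huv
  constructor
  · have h := Real.log_le_sub_one_of_pos (div_pos hv hu)
    have e : Real.log (v / u) = -Real.log (u / v) := by
      rw [← Real.log_inv]; congr 1; rw [inv_div]
    have e2 : v / u - 1 = (v - u) / u := by field_simp
    rw [e, e2] at h
    have e3 : (u - v) / u = -((v - u) / u) := by ring
    linarith
  · have h := Real.log_le_sub_one_of_pos (div_pos hu hv)
    have e2 : u / v - 1 = (u - v) / v := by field_simp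
    linarith

private lemma etak_zero (r : ℕ → ℝ) (k m : ℕ) : etak r k m 0 = 0 := by
  simp [etak]

private lemma prod_le_prod_Ioc {f : ℕ → ℝ} {i K m : ℕ} (hiK : i ≤ K) (hKm : K ≤ m)
    (h0 : ∀ j, i < j → j ≤ m → 0 ≤ f j) (h1 : ∀ j, i < j → j ≤ m → f j ≤ 1) :
    ∏ j ∈ Finset.Ioc i m, f j ≤ ∏ j ∈ Finset.Ioc K m, f j := by
  rw [← Finset.prod_Ioc_consecutive _ hiK hKm]
  have hQ : 0 ≤ ∏ j ∈ Finset.Ioc K m, f j := by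
    apply Finset.prod_nonneg
    intro j hj
    obtain ⟨hj1, hj2⟩ := Finset.mem_Ioc.mp hj
    exact h0 j (lt_of_le_of_lt hiK hj1) hj2
  have hle1 : ∏ j ∈ Finset.Ioc i K, f j ≤ 1 := by
    apply Finset.prod_le_one
    · intro j hj
      obtain ⟨hj1, hj2⟩ := Finset.mem_Ioc.mp hj
      exact h0 j hj1 (le_trans hj2 hKm)
    · intro j hj
      obtain ⟨hj1, hj2⟩ := Finset.mem_Ioc.mp hj
      exact h1 j hj1 (le_trans hj2 hKm)
  calc (∏ j ∈ Finset.Ioc i K, f j) * ∏ j ∈ Finset.Ioc K m, f j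
      ≤ 1 * ∏ j ∈ Finset.Ioc K m, f j := by
        exact mul_le_mul_of_nonneg_right hle1 hQ
    _ = ∏ j ∈ Finset.Ioc K m, f j := one_mul _

private lemma prod_tendsto_zero (r : ℕ → ℝ) (h0 : r 0 = 0) (hmono : StrictMono r)
    (hdiv : Tendsto (fun m => ∑ j ∈ Finset.Icc 1 m, 1 / r j) atTop atTop)
    (c A0 : ℝ) (hc : 0 < c) (hA0 : 0 ≤ A0) (K : ℕ)
    (hfac : ∀ j, K < j → A0 + c ≤ r j) :
    Tendsto (fun m => ∏ j ∈ Finset.Ioc K m, (1 - c / (r j - A0))) atTop (nhds 0) := by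
  have hrpos : ∀ j, K < j → 0 < r j - A0 := fun j hj => by have := hfac j hj; linarith
  -- the partial sums over `Ioc K m` diverge
  have hS : Tendsto (fun m => ∑ j ∈ Finset.Ioc K m, 1 / r j) atTop atTop := by
    have hIcc : ∀ m, K ≤ m → ∑ j ∈ Finset.Ioc K m, 1 / r j
        = ∑ j ∈ Finset.Icc 1 m, 1 / r j + -∑ j ∈ Finset.Icc 1 K, 1 / r j := by
      intro m hm
      rw [show Finset.Icc 1 m = Finset.Ioc 0 m from Finset.Icc_add_one_left_eq_Ioc 0 m,
        show Finset.Icc 1 K = Finset.Ioc 0 K from Finset.Icc_add_one_left_eq_Ioc 0 K,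
        ← Finset.sum_Ioc_consecutive _ (Nat.zero_le K) hm]
      ring
    have h1 := tendsto_atTop_add_const_right atTop (-∑ j ∈ Finset.Icc 1 K, 1 / r j) hdiv
    apply Tendsto.congr' _ h1
    filter_upwards [eventually_ge_atTop K] with m hm
    exact (hIcc m hm).symm
  have hexp : Tendsto (fun m => Real.exp (-c * ∑ j ∈ Finset.Ioc K m, 1 / r j))
      atTop (nhds 0) := by
    exact Real.tendsto_exp_atBot.comp (hS.const_mul_atTop_of_neg (by linarith))
  apply squeeze_zero (g := fun m => Real.exp (-c * ∑ j ∈ Finset.Ioc K m, 1 / r j)) _ _ hexp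
  · intro m
    apply Finset.prod_nonneg
    intro j hj
    have hjK := (Finset.mem_Ioc.mp hj).1
    have h1 : c / (r j - A0) ≤ 1 := by
      rw [div_le_one (hrpos j hjK)]
      have := hfac j hjK; linarith
    linarith
  · intro m
    show ∏ j ∈ Finset.Ioc K m, (1 - c / (r j - A0))
        ≤ Real.exp (-c * ∑ j ∈ Finset.Ioc K m, 1 / r j)
    have e : Real.exp (-c * ∑ j ∈ Finset.Ioc K m, 1 / r j)
        = ∏ j ∈ Finset.Ioc K m, Real.exp (-c * (1 / r j)) := by
      rw [← Real.exp_sum, ← Finset.mul_sum]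
    rw [e]
    apply Finset.prod_le_prod
    · intro j hj
      have hjK := (Finset.mem_Ioc.mp hj).1
      have h1 : c / (r j - A0) ≤ 1 := by
        rw [div_le_one (hrpos j hjK)]
        have := hfac j hjK; linarith
      linarith
    · intro j hj
      have hjK := (Finset.mem_Ioc.mp hj).1
      have hr : 0 < r j - A0 := hrpos j hjK
      have hrj : 0 < r j := by linarith
      have step1 : c / r j ≤ c / (r j - A0) := by
        apply div_le_div_of_nonneg_left hc.le hr
        linarith
      have step2 : 1 - c / r j ≤ Real.exp (-(c / r j)) := by
        have := Real.add_one_le_exp (-(c / r j))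
        linarith
      calc 1 - c / (r j - A0) ≤ 1 - c / r j := by linarith
        _ ≤ Real.exp (-(c / r j)) := step2
        _ = Real.exp (-c * (1 / r j)) := by ring_nf

set_option maxHeartbeats 2000000 in
theorem etak_convergence (r : ℕ → ℝ) (h0 : r 0 = 0) (hmono : StrictMono r)
    (hinf : Tendsto r atTop atTop)
    (hdiv : Tendsto (fun m => ∑ j ∈ Finset.Icc 1 m, 1 / r j) atTop atTop)
    (k : ℕ) :
    ∀ ε > 0, ∃ M : ℕ, ∀ m ≥ M, ∀ i ≤ m,
      |etak r k m (i - k) -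
          (etak r (k + 1) m (i - (k + 1))) ^
            ((r (k + 1) - r k) / (r (k + 2) - r (k + 1)))| < ε := by
  intro ε hε
  have hrnn : ∀ j : ℕ, 0 ≤ r j := by
    intro j
    rcases Nat.eq_zero_or_pos j with h | h
    · simp [h, h0]
    · have := hmono h; rw [h0] at this; linarith
  have hAB : r k < r (k + 1) := hmono (lt_add_one k)
  have hBC : r (k + 1) < r (k + 2) := hmono (by omega)
  set γ := (r (k + 1) - r k) / (r (k + 2) - r (k + 1)) with hγdef
  have hd1 : (0:ℝ) < r (k + 1) - r k := by linarith
  have hd2 : (0:ℝ) < r (k + 2) - r (k + 1) := by linarith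
  have hγ : 0 < γ := div_pos hd1 hd2
  set δ := min (γ / 2) (ε * γ / 4) with hδdef
  have hδ : 0 < δ := lt_min (by linarith) (by positivity)
  have hδγ : δ ≤ γ / 2 := min_le_left _ _
  have hδε : δ ≤ ε * γ / 4 := min_le_right _ _
  obtain ⟨J, hJ⟩ := eventually_atTop.mp (hinf.eventually_ge_atTop
      (max (r (k + 2) + 1) (r k + γ * (r (k + 2) - r k) / δ)))
  set K := max J (k + 2) with hKdef
  have hKk2 : k + 2 ≤ K := le_max_right _ _
  have hγd2 : γ * (r (k + 2) - r (k + 1)) = r (k + 1) - r k :=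
    div_mul_cancel₀ _ (by linarith)
  clear_value γ δ K
  -- factor bounds
  have hbfac : ∀ j, k + 2 ≤ j →
      0 < 1 - (r (k + 1) - r k) / (r j - r k) ∧
      1 - (r (k + 1) - r k) / (r j - r k) ≤ 1 := by
    intro j hj
    have h1 : r (k + 2) ≤ r j := hmono.monotone hj
    have h2 : 0 < r j - r k := by linarith
    constructor
    · have : (r (k + 1) - r k) / (r j - r k) < 1 := by
        rw [div_lt_one h2]; linarith
      linarith
    · have : 0 ≤ (r (k + 1) - r k) / (r j - r k) := by positivity
      linarith
  have hafac : ∀ j, k + 3 ≤ j →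
      0 < 1 - (r (k + 2) - r (k + 1)) / (r j - r (k + 1)) ∧
      1 - (r (k + 2) - r (k + 1)) / (r j - r (k + 1)) ≤ 1 := by
    intro j hj
    have h1 : r (k + 3) ≤ r j := hmono.monotone hj
    have h23 : r (k + 2) < r (k + 3) := hmono (by omega)
    have h2 : 0 < r j - r (k + 1) := by linarith
    constructor
    · have : (r (k + 2) - r (k + 1)) / (r j - r (k + 1)) < 1 := by
        rw [div_lt_one h2]; linarith
      linarith
    · have : 0 ≤ (r (k + 2) - r (k + 1)) / (r j - r (k + 1)) := by positivity
      linarith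
  -- per-factor rpow comparison for j > K
  have hfactor : ∀ j, K < j →
      (1 - (r (k + 2) - r (k + 1)) / (r j - r (k + 1))) ^ γ
        ≤ 1 - (r (k + 1) - r k) / (r j - r k) ∧
      1 - (r (k + 1) - r k) / (r j - r k)
        ≤ (1 - (r (k + 2) - r (k + 1)) / (r j - r (k + 1))) ^ (γ - δ) := by
    intro j hjK
    have hrj : max (r (k + 2) + 1) (r k + γ * (r (k + 2) - r k) / δ) ≤ r j :=
      hJ j (by omega)
    have hrjC : r (k + 2) + 1 ≤ r j := le_trans (le_max_left _ _) hrj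
    have hrjT : r k + γ * (r (k + 2) - r k) / δ ≤ r j := le_trans (le_max_right _ _) hrj
    have hA : 0 < r j - r k := by linarith
    have hB : 0 < r j - r (k + 1) := by linarith
    have hC : 0 < r j - r (k + 2) := by linarith
    have hbval : 1 - (r (k + 1) - r k) / (r j - r k)
        = (r j - r (k + 1)) / (r j - r k) := by
      have hne : r j - r k ≠ 0 := by linarith
      rw [eq_div_iff hne, sub_mul, one_mul, div_mul_cancel₀ _ hne]; ring
    have haval : 1 - (r (k + 2) - r (k + 1)) / (r j - r (k + 1))
        = (r j - r (k + 2)) / (r j - r (k + 1)) := by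
      have hne : r j - r (k + 1) ≠ 0 := by linarith
      rw [eq_div_iff hne, sub_mul, one_mul, div_mul_cancel₀ _ hne]; ring
    have hbpos : 0 < (r j - r (k + 1)) / (r j - r k) := div_pos hB hA
    have hapos : 0 < (r j - r (k + 2)) / (r j - r (k + 1)) := div_pos hC hB
    obtain ⟨hlb1, hlb2⟩ := log_div_bounds hB (show r j - r (k + 1) ≤ r j - r k by linarith)
    obtain ⟨hla1, hla2⟩ := log_div_bounds hC (show r j - r (k + 2) ≤ r j - r (k + 1) by linarith)
    -- hlb1 : ((rj-B)-(rj-A))/(rj-B) ≤ log b ; hlb2 : log b ≤ ((rj-B)-(rj-A))/(rj-A)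
    -- hla1 : ((rj-C)-(rj-B))/(rj-C) ≤ log a ; hla2 : log a ≤ ((rj-C)-(rj-B))/(rj-B)
    rw [hbval, haval]
    constructor
    · -- a ^ γ ≤ b
      rw [Real.rpow_def_of_pos hapos, ← Real.exp_log hbpos]
      apply Real.exp_le_exp.mpr
      have h1 := mul_le_mul_of_nonneg_left hla2 hγ.le
      have hXY : γ * ((r j - r (k + 2) - (r j - r (k + 1))) / (r j - r (k + 1)))
          = (r j - r (k + 1) - (r j - r k)) / (r j - r (k + 1)) := by
        rw [mul_div_assoc']
        congr 1
        linear_combination -hγd2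
      linarith [hXY ▸ h1, hlb1]
    · -- b ≤ a ^ (γ - δ)
      rw [Real.rpow_def_of_pos hapos, ← Real.exp_log hbpos]
      apply Real.exp_le_exp.mpr
      have hγδ : 0 < γ - δ := by linarith
      have hδrj : γ * (r (k + 2) - r k) ≤ δ * (r j - r k) := by
        have h2 : γ * (r (k + 2) - r k) / δ ≤ r j - r k := by linarith
        calc γ * (r (k + 2) - r k) = δ * (γ * (r (k + 2) - r k) / δ) := by
              rw [mul_div_assoc']
              rw [mul_comm δ, mul_div_assoc, div_self hδ.ne', mul_one]
          _ ≤ δ * (r j - r k) := mul_le_mul_of_nonneg_left h2 hδ.le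
      have h5 : (γ - δ) * (r j - r k) ≤ γ * (r j - r (k + 2)) := by nlinarith [hδrj]
      have h6 : (r j - r (k + 1) - (r j - r k)) / (r j - r k)
          ≤ (γ - δ) * ((r j - r (k + 2) - (r j - r (k + 1))) / (r j - r (k + 2))) := by
        have e1 : (r j - r (k + 1) - (r j - r k)) / (r j - r k)
            = -((r (k + 1) - r k) / (r j - r k)) := by
          rw [← neg_div]; congr 1; ring
        have e2 : (r j - r (k + 2) - (r j - r (k + 1))) / (r j - r (k + 2))
            = -((r (k + 2) - r (k + 1)) / (r j - r (k + 2))) := by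
          rw [← neg_div]; congr 1; ring
        rw [e1, e2, mul_neg, neg_le_neg_iff, mul_div_assoc', div_le_div_iff₀ hC hA]
        have h8 := mul_le_mul_of_nonneg_right h5 hd2.le
        calc (γ - δ) * (r (k + 2) - r (k + 1)) * (r j - r k)
            = (γ - δ) * (r j - r k) * (r (k + 2) - r (k + 1)) := by ring
          _ ≤ γ * (r j - r (k + 2)) * (r (k + 2) - r (k + 1)) := h8
          _ = γ * (r (k + 2) - r (k + 1)) * (r j - r (k + 2)) := by ring
          _ = (r (k + 1) - r k) * (r j - r (k + 2)) := by rw [hγd2]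
      have h7 := mul_le_mul_of_nonneg_left hla1 hγδ.le
      linarith [hlb2, h6, h7]
  -- products from K tend to zero
  have hQK := prod_tendsto_zero r h0 hmono hdiv (r (k + 1) - r k) (r k) hd1 (hrnn k) K
      (fun j hj => by
        have : r (k + 2) ≤ r j := hmono.monotone (by omega)
        linarith)
  have hPK := prod_tendsto_zero r h0 hmono hdiv (r (k + 2) - r (k + 1)) (r (k + 1)) hd2
      (hrnn (k + 1)) K
      (fun j hj => by
        have : r (k + 2) ≤ r j := hmono.monotone (by omega)
        linarith)
  have hPKγ : Tendsto (fun m => (∏ j ∈ Finset.Ioc K m,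
      (1 - (r (k + 2) - r (k + 1)) / (r j - r (k + 1)))) ^ γ) atTop (nhds 0) := by
    have := hPK.rpow_const (Or.inr hγ.le)
    rwa [Real.zero_rpow hγ.ne'] at this
  obtain ⟨M1, hM1⟩ := (Metric.tendsto_atTop.mp hQK) (ε / 2) (by linarith)
  obtain ⟨M2, hM2⟩ := (Metric.tendsto_atTop.mp hPKγ) (ε / 2) (by linarith)
  refine ⟨max (max M1 M2) (K + 1), fun m hm i hi => ?_⟩
  have hmK : K ≤ m := by
    have := le_trans (le_max_right (max M1 M2) (K + 1)) hm; omega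
  have hQKsmall : ∏ j ∈ Finset.Ioc K m, (1 - (r (k + 1) - r k) / (r j - r k)) < ε / 2 := by
    have h1 := hM1 m (le_trans (le_trans (le_max_left M1 M2) (le_max_left _ _)) hm)
    rw [Real.dist_eq, sub_zero] at h1
    exact lt_of_le_of_lt (le_abs_self _) h1
  have hPKsmall : (∏ j ∈ Finset.Ioc K m,
      (1 - (r (k + 2) - r (k + 1)) / (r j - r (k + 1)))) ^ γ < ε / 2 := by
    have h1 := hM2 m (le_trans (le_trans (le_max_right M1 M2) (le_max_left _ _)) hm)
    rw [Real.dist_eq, sub_zero] at h1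
    exact lt_of_le_of_lt (le_abs_self _) h1
  rcases le_or_gt i k with hik | hik
  · -- both terms vanish
    have e1 : i - k = 0 := by omega
    have e2 : i - (k + 1) = 0 := by omega
    rw [e1, e2, etak_zero, etak_zero]
    rw [Real.zero_rpow hγ.ne', sub_zero, abs_zero]
    exact hε
  -- now k + 1 ≤ i
  have hQeq : etak r k m (i - k)
      = ∏ j ∈ Finset.Ioc i m, (1 - (r (k + 1) - r k) / (r j - r k)) := by
    have hne : i - k ≠ 0 := by omega
    simp only [etak, if_neg hne, Nat.sub_add_cancel (show k ≤ i by omega)]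
  rcases eq_or_lt_of_le (show k + 1 ≤ i by omega) with hik1 | hik2
  · -- i = k + 1 : second term is zero
    have e2 : i - (k + 1) = 0 := by omega
    rw [hQeq, e2, etak_zero]
    rw [Real.zero_rpow hγ.ne', sub_zero]
    have hQnn : 0 ≤ ∏ j ∈ Finset.Ioc i m, (1 - (r (k + 1) - r k) / (r j - r k)) := by
      apply Finset.prod_nonneg
      intro j hj
      exact (hbfac j (by have := (Finset.mem_Ioc.mp hj).1; omega)).1.le
    rw [abs_of_nonneg hQnn]
    have hQle : ∏ j ∈ Finset.Ioc i m, (1 - (r (k + 1) - r k) / (r j - r k))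
        ≤ ∏ j ∈ Finset.Ioc K m, (1 - (r (k + 1) - r k) / (r j - r k)) := by
      apply prod_le_prod_Ioc (by omega) hmK
      · intro j hj _; exact (hbfac j (by omega)).1.le
      · intro j hj _; exact (hbfac j (by omega)).2
    linarith
  -- now k + 2 ≤ i
  have hik2' : k + 2 ≤ i := by omega
  have hPeq : etak r (k + 1) m (i - (k + 1))
      = ∏ j ∈ Finset.Ioc i m, (1 - (r (k + 2) - r (k + 1)) / (r j - r (k + 1))) := by
    have hne : i - (k + 1) ≠ 0 := by omega
    simp only [etak, if_neg hne, Nat.sub_add_cancel (show k + 1 ≤ i by omega),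
      show k + 1 + 1 = k + 2 from rfl]
  rw [hQeq, hPeq]
  have hQnn : 0 ≤ ∏ j ∈ Finset.Ioc i m, (1 - (r (k + 1) - r k) / (r j - r k)) := by
    apply Finset.prod_nonneg
    intro j hj
    exact (hbfac j (by have := (Finset.mem_Ioc.mp hj).1; omega)).1.le
  have hPnn : 0 ≤ ∏ j ∈ Finset.Ioc i m, (1 - (r (k + 2) - r (k + 1)) / (r j - r (k + 1))) := by
    apply Finset.prod_nonneg
    intro j hj
    exact (hafac j (by have := (Finset.mem_Ioc.mp hj).1; omega)).1.le
  rcases le_or_gt i K with hiK | hiK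
  · -- i ≤ K : both terms are small
    have hQle : ∏ j ∈ Finset.Ioc i m, (1 - (r (k + 1) - r k) / (r j - r k))
        ≤ ∏ j ∈ Finset.Ioc K m, (1 - (r (k + 1) - r k) / (r j - r k)) := by
      apply prod_le_prod_Ioc hiK hmK
      · intro j hj _; exact (hbfac j (by omega)).1.le
      · intro j hj _; exact (hbfac j (by omega)).2
    have hPle : ∏ j ∈ Finset.Ioc i m, (1 - (r (k + 2) - r (k + 1)) / (r j - r (k + 1)))
        ≤ ∏ j ∈ Finset.Ioc K m, (1 - (r (k + 2) - r (k + 1)) / (r j - r (k + 1))) := by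
      apply prod_le_prod_Ioc hiK hmK
      · intro j hj _; exact (hafac j (by omega)).1.le
      · intro j hj _; exact (hafac j (by omega)).2
    have hPγle : (∏ j ∈ Finset.Ioc i m, (1 - (r (k + 2) - r (k + 1)) / (r j - r (k + 1)))) ^ γ
        ≤ (∏ j ∈ Finset.Ioc K m, (1 - (r (k + 2) - r (k + 1)) / (r j - r (k + 1)))) ^ γ :=
      Real.rpow_le_rpow hPnn hPle hγ.le
    have hPγnn : 0 ≤ (∏ j ∈ Finset.Ioc i m,
        (1 - (r (k + 2) - r (k + 1)) / (r j - r (k + 1)))) ^ γ := Real.rpow_nonneg hPnn _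
    rw [abs_sub_lt_iff]
    constructor <;> linarith
  · -- K < i : tail estimate
    have hfac' : ∀ j ∈ Finset.Ioc i m, K < j := by
      intro j hj
      have := (Finset.mem_Ioc.mp hj).1; omega
    have hPpos : 0 < ∏ j ∈ Finset.Ioc i m,
        (1 - (r (k + 2) - r (k + 1)) / (r j - r (k + 1))) := by
      apply Finset.prod_pos
      intro j hj
      exact (hafac j (by have := hfac' j hj; omega)).1
    have hPle1 : ∏ j ∈ Finset.Ioc i m,
        (1 - (r (k + 2) - r (k + 1)) / (r j - r (k + 1))) ≤ 1 := by
      apply Finset.prod_le_one (fun j hj => (hafac j (by have := hfac' j hj; omega)).1.le)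
        (fun j hj => (hafac j (by have := hfac' j hj; omega)).2)
    set P := ∏ j ∈ Finset.Ioc i m, (1 - (r (k + 2) - r (k + 1)) / (r j - r (k + 1))) with hPdef
    set Q := ∏ j ∈ Finset.Ioc i m, (1 - (r (k + 1) - r k) / (r j - r k)) with hQdef
    have hlow : P ^ γ ≤ Q := by
      rw [hPdef, ← Real.finset_prod_rpow _ _
        (fun j hj => (hafac j (by have := hfac' j hj; omega)).1.le)]
      apply Finset.prod_le_prod
      · intro j hj
        exact Real.rpow_nonneg (hafac j (by have := hfac' j hj; omega)).1.le _
      · intro j hj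
        exact (hfactor j (hfac' j hj)).1
    have hhigh : Q ≤ P ^ (γ - δ) := by
      rw [hPdef, ← Real.finset_prod_rpow _ _
        (fun j hj => (hafac j (by have := hfac' j hj; omega)).1.le)]
      apply Finset.prod_le_prod
      · intro j hj
        exact (hbfac j (by have := hfac' j hj; omega)).1.le
      · intro j hj
        exact (hfactor j (hfac' j hj)).2
    -- `P^(γ-δ) - P^γ ≤ ε/2`
    have hγδ : 0 < γ - δ := by linarith
    have hlogP : Real.log P ≤ 0 := Real.log_nonpos hPpos.le hPle1
    clear_value P Q
    rw [← hPdef, ← hQdef] at *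
    clear hM1 hM2 hQK hPK hPKγ hJ hfactor hQeq hfac' hQKsmall hPKsmall hbfac hafac
      hinf hdiv hQnn hPnn hPdef hQdef hiK hmK hi hm hrnn
    have key : P ^ (γ - δ) - P ^ γ ≤ ε / 2 := by
      have e1 : P ^ γ = P ^ (γ - δ) * P ^ δ := by
        rw [← Real.rpow_add hPpos]; congr 1; ring
      have h1 : 1 - P ^ δ ≤ δ * (-Real.log P) := by
        have h2' : Real.log P * δ + 1 ≤ Real.exp (Real.log P * δ) :=
          Real.add_one_le_exp _
        rw [Real.rpow_def_of_pos hPpos]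
        nlinarith [h2']
      have h2 : P ^ (γ - δ) * (-Real.log P) ≤ 1 / (γ - δ) := by
        have e2 : P ^ (γ - δ) = Real.exp (Real.log P * (γ - δ)) :=
          Real.rpow_def_of_pos hPpos _
        rcases eq_or_lt_of_le hlogP with hl0 | hl0
        · rw [e2, hl0, zero_mul, Real.exp_zero, neg_zero, mul_zero]
          positivity
        · have hX : -Real.log P * (γ - δ) + 1 ≤ Real.exp (-Real.log P * (γ - δ)) :=
            Real.add_one_le_exp _
          have hEE' : Real.exp (Real.log P * (γ - δ))
              * Real.exp (-Real.log P * (γ - δ)) = 1 := by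
            rw [← Real.exp_add,
              show Real.log P * (γ - δ) + -Real.log P * (γ - δ) = 0 by ring, Real.exp_zero]
          rw [e2, le_div_iff₀ hγδ]
          nlinarith [hX, hEE', Real.exp_pos (Real.log P * (γ - δ)), hl0]
      have h3 : P ^ (γ - δ) - P ^ γ = P ^ (γ - δ) * (1 - P ^ δ) := by
        rw [e1]; ring
      have h4 : P ^ (γ - δ) * (1 - P ^ δ) ≤ δ * (P ^ (γ - δ) * (-Real.log P)) := by
        have := mul_le_mul_of_nonneg_left h1 (Real.rpow_nonneg hPpos.le (γ - δ))
        linarith [this]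
      have h5 : δ * (P ^ (γ - δ) * (-Real.log P)) ≤ δ * (1 / (γ - δ)) :=
        mul_le_mul_of_nonneg_left h2 hδ.le
      have h6 : δ * (1 / (γ - δ)) ≤ (ε * γ / 4) * (2 / γ) := by
        apply mul_le_mul hδε _ (by positivity) (by positivity)
        rw [div_le_div_iff₀ hγδ hγ]
        linarith
      have h7 : (ε * γ / 4) * (2 / γ) = ε / 2 := by
        field_simp; ring
      linarith
    have hQPγ : 0 ≤ Q - P ^ γ := by linarith
    rw [abs_of_nonneg hQPγ]
    linarith
end
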